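/- arXiv:0712.0583 — 9 statements merged into one kernel-verified Lean document; each statement's English description precedes it below -/
import Mathlib

section
/- For every y₀ > 0, the limit as ε → 0⁺ of the integral ∫_{ε}^{2y₀/ε} exp(ε t²/2 − y₀ t) dt equals 2/y₀. -/
open Real Set Filter Topology intervalIntegral

lemma int_exp_neg_mul (c : ℝ) (hc : 0 < c) (a b : ℝ) :
    ∫ t in a..b, Real.exp (-(c * t)) = (Real.exp (-(c*a)) - Real.exp (-(c*b))) / c := by
  have hderiv : ∀ t : ℝ, HasDerivAt (fun t : ℝ => -Real.exp (-(c*t)) / c)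
      (Real.exp (-(c*t))) t := by
    intro t
    have h1 : HasDerivAt (fun t : ℝ => -(c*t)) (-c) t := by
      simpa using ((hasDerivAt_id t).const_mul (-c))
    have h3 := (h1.exp.div_const c).neg
    convert h3 using 1
    all_goals first
      | rfl
      | (funext x; simp [neg_div])
      | field_simp [hc.ne']
  rw [intervalIntegral.integral_eq_sub_of_hasDerivAt (fun t _ => hderiv t)
    ((Real.continuous_exp.comp (by continuity)).intervalIntegrable a b)]
  field_simp
  ring

lemma decomp_integral (y₀ ε : ℝ) (hε : 0 < ε) :
    (∫ t in ε..(2 * y₀ / ε), Real.exp (ε * t ^ 2 / 2 - y₀ * t))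
      = 2 * (∫ t in (0:ℝ)..(y₀ / ε), Real.exp (ε * t ^ 2 / 2 - y₀ * t))
        - ∫ t in (0:ℝ)..ε, Real.exp (ε * t ^ 2 / 2 - y₀ * t) := by
  have hεne : ε ≠ 0 := hε.ne'
  have hc : Continuous fun t : ℝ => Real.exp (ε * t ^ 2 / 2 - y₀ * t) := by
    fun_prop
  have hint : ∀ a b : ℝ, IntervalIntegrable (fun t => Real.exp (ε * t ^ 2 / 2 - y₀ * t))
      MeasureTheory.volume a b := fun a b => hc.intervalIntegrable a b
  have e1 : 2*y₀/ε - y₀/ε = y₀/ε := by field_simp; ring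
  have hsym : (∫ t in (y₀/ε)..(2*y₀/ε), Real.exp (ε * t ^ 2 / 2 - y₀ * t))
      = ∫ t in (0:ℝ)..(y₀/ε), Real.exp (ε * t ^ 2 / 2 - y₀ * t) := by
    have h := intervalIntegral.integral_comp_sub_left (a := (0:ℝ)) (b := y₀/ε)
      (fun t => Real.exp (ε * t ^ 2 / 2 - y₀ * t)) (2*y₀/ε)
    rw [e1, sub_zero] at h
    rw [← h]
    apply intervalIntegral.integral_congr
    intro x _
    dsimp only
    rw [Real.exp_eq_exp]
    field_simp
    ring
  have h1 := intervalIntegral.integral_add_adjacent_intervals (hint 0 ε) (hint ε (2*y₀/ε))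
  have h2 := intervalIntegral.integral_add_adjacent_intervals (hint 0 (y₀/ε)) (hint (y₀/ε) (2*y₀/ε))
  rw [hsym] at h2
  linarith

/-- For every `y₀ > 0`, the integral `∫_{ε}^{2 y₀ / ε} exp(ε t²/2 - y₀ t) dt`
tends to `2 / y₀` as `ε → 0⁺`. -/
theorem integral_tendsto_two_div
    (y₀ : ℝ) (hy₀ : 0 < y₀) :
    Tendsto (fun ε : ℝ => ∫ t in ε..(2 * y₀ / ε), Real.exp (ε * t ^ 2 / 2 - y₀ * t))
      (𝓝[>] 0) (𝓝 (2 / y₀)) := by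
  refine tendsto_of_tendsto_of_tendsto_of_le_of_le'
    (g := fun ε : ℝ => 2 * ((1 - Real.exp (-(y₀ * (y₀ / ε)))) / y₀) - ε * Real.exp (ε * ε ^ 2 / 2))
    (h := fun ε : ℝ => 2 * (Real.exp (ε ^ ((1:ℝ)/3) / 2) / y₀
        + 2 * Real.exp (-(y₀ / 2 * (ε ^ ((1:ℝ)/3))⁻¹)) / y₀))
    ?_ ?_ ?_ ?_
  · -- lower bound tends to 2/y₀
    have hA : Tendsto (fun ε : ℝ => Real.exp (-(y₀ * (y₀ / ε)))) (𝓝[>] 0) (𝓝 0) := by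
      have h1 : Tendsto (fun ε : ℝ => y₀ * (y₀ / ε)) (𝓝[>] 0) atTop := by
        have h2 : Tendsto (fun ε : ℝ => (y₀ * y₀) * ε⁻¹) (𝓝[>] 0) atTop :=
          tendsto_inv_nhdsGT_zero.const_mul_atTop (by positivity)
        refine h2.congr fun ε => by rw [div_eq_mul_inv]; ring
      exact Real.tendsto_exp_atBot.comp (tendsto_neg_atTop_atBot.comp h1)
    have hB : Tendsto (fun ε : ℝ => ε * Real.exp (ε * ε ^ 2 / 2)) (𝓝[>] 0) (𝓝 0) := by
      have h1 : Tendsto (fun ε : ℝ => ε * Real.exp (ε * ε ^ 2 / 2)) (𝓝 0)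
          (𝓝 (0 * Real.exp (0 * 0 ^ 2 / 2))) :=
        (Continuous.tendsto (by fun_prop) 0)
      simpa using h1.mono_left nhdsWithin_le_nhds
    have h := (((tendsto_const_nhds (x := (1:ℝ)) (f := 𝓝[>] (0:ℝ))).sub hA).div_const y₀).const_mul 2 |>.sub hB
    have e : 2 * ((1 - 0) / y₀) - 0 = 2 / y₀ := by ring
    rwa [e] at h
  · -- upper bound tends to 2/y₀
    have hr : Tendsto (fun ε : ℝ => ε ^ ((1:ℝ)/3)) (𝓝[>] 0) (𝓝[>] 0) := by
      rw [tendsto_nhdsWithin_iff]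
      constructor
      · have hc : ContinuousAt (fun x : ℝ => x ^ ((1:ℝ)/3)) 0 :=
          Real.continuousAt_rpow_const 0 _ (Or.inr (by norm_num))
        have := hc.tendsto.mono_left (nhdsWithin_le_nhds (s := Ioi (0:ℝ)))
        simpa [Real.zero_rpow] using this
      · filter_upwards [self_mem_nhdsWithin] with ε hε
        exact Real.rpow_pos_of_pos hε _
    have hr0 : Tendsto (fun ε : ℝ => ε ^ ((1:ℝ)/3)) (𝓝[>] 0) (𝓝 0) :=
      hr.mono_right nhdsWithin_le_nhds
    have hexp1 : Tendsto (fun ε : ℝ => Real.exp (ε ^ ((1:ℝ)/3) / 2)) (𝓝[>] 0) (𝓝 1) := by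
      have hdiv := hr0.div_const 2
      rw [zero_div] at hdiv
      have := (Real.continuous_exp.tendsto 0).comp hdiv
      simpa [Function.comp_def] using this
    have hT : Tendsto (fun ε : ℝ => (ε ^ ((1:ℝ)/3))⁻¹) (𝓝[>] 0) atTop :=
      tendsto_inv_nhdsGT_zero.comp hr
    have hexp2 : Tendsto (fun ε : ℝ => Real.exp (-(y₀ / 2 * (ε ^ ((1:ℝ)/3))⁻¹)))
        (𝓝[>] 0) (𝓝 0) :=
      Real.tendsto_exp_atBot.comp (tendsto_neg_atTop_atBot.comp
        (hT.const_mul_atTop (by positivity)))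
    have h := ((hexp1.div_const y₀).add ((hexp2.const_mul 2).div_const y₀)).const_mul 2
    have e : 2 * (1 / y₀ + 2 * 0 / y₀) = 2 / y₀ := by ring
    rwa [e] at h
  · -- lower bound
    filter_upwards [self_mem_nhdsWithin] with ε (hε : 0 < ε)
    have hc : Continuous fun t : ℝ => Real.exp (ε * t ^ 2 / 2 - y₀ * t) := by fun_prop
    have hint : ∀ a b : ℝ, IntervalIntegrable (fun t => Real.exp (ε * t ^ 2 / 2 - y₀ * t))
        MeasureTheory.volume a b := fun a b => hc.intervalIntegrable a b
    rw [decomp_integral y₀ ε hε]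
    have hG : (Real.exp (-(y₀ * 0)) - Real.exp (-(y₀ * (y₀ / ε)))) / y₀
        ≤ ∫ t in (0:ℝ)..(y₀ / ε), Real.exp (ε * t ^ 2 / 2 - y₀ * t) := by
      rw [← int_exp_neg_mul y₀ hy₀ 0 (y₀ / ε)]
      apply intervalIntegral.integral_mono_on (by positivity)
        ((by fun_prop : Continuous fun t : ℝ => Real.exp (-(y₀ * t))).intervalIntegrable _ _)
        (hint _ _)
      intro t ht
      apply Real.exp_le_exp.2
      nlinarith [ht.1, sq_nonneg t, hε.le]
    have hC : (∫ t in (0:ℝ)..ε, Real.exp (ε * t ^ 2 / 2 - y₀ * t))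
        ≤ ε * Real.exp (ε * ε ^ 2 / 2) := by
      have h1 : (∫ t in (0:ℝ)..ε, Real.exp (ε * t ^ 2 / 2 - y₀ * t))
          ≤ ∫ _ in (0:ℝ)..ε, Real.exp (ε * ε ^ 2 / 2) := by
        apply intervalIntegral.integral_mono_on hε.le (hint _ _)
          (intervalIntegrable_const)
        intro t ht
        apply Real.exp_le_exp.2
        have key : 0 ≤ ε * ((ε - t) * (ε + t)) :=
          mul_nonneg hε.le (mul_nonneg (by linarith [ht.2]) (by linarith [ht.1]))
        have key2 : 0 ≤ y₀ * t := mul_nonneg hy₀.le ht.1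
        nlinarith [key, key2]
      simpa using h1
    have e0 : Real.exp (-(y₀ * 0)) = 1 := by norm_num
    rw [e0] at hG
    linarith
  · -- upper bound
    have h23 : Tendsto (fun ε : ℝ => ε ^ ((2:ℝ)/3)) (𝓝[>] 0) (𝓝 0) := by
      have hc : ContinuousAt (fun x : ℝ => x ^ ((2:ℝ)/3)) 0 :=
        Real.continuousAt_rpow_const 0 _ (Or.inr (by norm_num))
      have := hc.tendsto.mono_left (nhdsWithin_le_nhds (s := Ioi (0:ℝ)))
      simpa [Real.zero_rpow] using this
    filter_upwards [self_mem_nhdsWithin, h23.eventually_lt_const hy₀] with ε (hε : 0 < ε) h2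
    have hc : Continuous fun t : ℝ => Real.exp (ε * t ^ 2 / 2 - y₀ * t) := by fun_prop
    have hint : ∀ a b : ℝ, IntervalIntegrable (fun t => Real.exp (ε * t ^ 2 / 2 - y₀ * t))
        MeasureTheory.volume a b := fun a b => hc.intervalIntegrable a b
    set r : ℝ := ε ^ ((1:ℝ)/3) with hrdef
    set T : ℝ := r⁻¹ with hTdef
    have hr0 : 0 < r := Real.rpow_pos_of_pos hε _
    have hT0 : 0 < T := inv_pos.2 hr0
    have hsum : r * ε ^ ((2:ℝ)/3) = ε := by
      rw [hrdef, ← Real.rpow_add hε]; norm_num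
    have hTle : T ≤ y₀ / ε := by
      rw [le_div_iff₀ hε]
      calc T * ε = T * (r * ε ^ ((2:ℝ)/3)) := by rw [hsum]
        _ = ε ^ ((2:ℝ)/3) := by rw [hTdef]; field_simp
        _ ≤ y₀ := h2.le
    have hrT2 : ε * T ^ 2 = r := by
      have hsq : r ^ 2 = ε ^ ((2:ℝ)/3) := by
        rw [hrdef, ← Real.rpow_natCast (ε ^ ((1:ℝ)/3)) 2, ← Real.rpow_mul hε.le]
        norm_num
      have hne : ε ^ ((2:ℝ)/3) ≠ 0 := ne_of_gt (Real.rpow_pos_of_pos hε _)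
      rw [hTdef, show (r⁻¹) ^ 2 = (r ^ 2)⁻¹ by ring, hsq]
      have hkey : ε * (ε ^ ((2:ℝ)/3))⁻¹ * ε ^ ((2:ℝ)/3) = r * ε ^ ((2:ℝ)/3) := by
        rw [inv_mul_cancel_right₀ hne, hsum]
      exact mul_right_cancel₀ hne hkey
    rw [decomp_integral y₀ ε hε]
    -- split G
    have hGsplit : (∫ t in (0:ℝ)..(y₀ / ε), Real.exp (ε * t ^ 2 / 2 - y₀ * t))
        = (∫ t in (0:ℝ)..T, Real.exp (ε * t ^ 2 / 2 - y₀ * t))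
          + ∫ t in T..(y₀ / ε), Real.exp (ε * t ^ 2 / 2 - y₀ * t) :=
      (intervalIntegral.integral_add_adjacent_intervals (hint 0 T) (hint T (y₀/ε))).symm
    have hhead : (∫ t in (0:ℝ)..T, Real.exp (ε * t ^ 2 / 2 - y₀ * t))
        ≤ Real.exp (r / 2) / y₀ := by
      have h1 : (∫ t in (0:ℝ)..T, Real.exp (ε * t ^ 2 / 2 - y₀ * t))
          ≤ ∫ t in (0:ℝ)..T, Real.exp (r / 2) * Real.exp (-(y₀ * t)) := by
        apply intervalIntegral.integral_mono_on hT0.le (hint _ _)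
          ((by fun_prop : Continuous fun t : ℝ =>
            Real.exp (r/2) * Real.exp (-(y₀ * t))).intervalIntegrable _ _)
        intro t ht
        rw [← Real.exp_add]
        apply Real.exp_le_exp.2
        have key : 0 ≤ ε * ((T - t) * (T + t)) :=
          mul_nonneg hε.le (mul_nonneg (by linarith [ht.2]) (by linarith [ht.1, hT0]))
        nlinarith [key, hrT2]
      have h2' : (∫ t in (0:ℝ)..T, Real.exp (r / 2) * Real.exp (-(y₀ * t)))
          = Real.exp (r / 2) * ((Real.exp (-(y₀ * 0)) - Real.exp (-(y₀ * T))) / y₀) := by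
        rw [intervalIntegral.integral_const_mul, int_exp_neg_mul y₀ hy₀]
      have h3 : Real.exp (r / 2) * ((Real.exp (-(y₀ * 0)) - Real.exp (-(y₀ * T))) / y₀)
          ≤ Real.exp (r / 2) * (1 / y₀) := by
        apply mul_le_mul_of_nonneg_left _ (Real.exp_nonneg _)
        have hx : Real.exp (-(y₀ * 0)) - Real.exp (-(y₀ * T)) ≤ 1 := by
          have := Real.exp_nonneg (-(y₀ * T))
          simp only [mul_zero, neg_zero, Real.exp_zero]
          linarith
        exact (div_le_div_iff_of_pos_right hy₀).mpr hx
      calc _ ≤ _ := h1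
        _ = _ := h2'
        _ ≤ _ := h3
        _ = Real.exp (r/2) / y₀ := by ring
    have htail : (∫ t in T..(y₀ / ε), Real.exp (ε * t ^ 2 / 2 - y₀ * t))
        ≤ 2 * Real.exp (-(y₀ / 2 * T)) / y₀ := by
      have h1 : (∫ t in T..(y₀ / ε), Real.exp (ε * t ^ 2 / 2 - y₀ * t))
          ≤ ∫ t in T..(y₀ / ε), Real.exp (-(y₀ / 2 * t)) := by
        apply intervalIntegral.integral_mono_on hTle (hint _ _)
          ((by fun_prop : Continuous fun t : ℝ =>
            Real.exp (-(y₀ / 2 * t))).intervalIntegrable _ _)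
        intro t ht
        apply Real.exp_le_exp.2
        have htu : ε * t ≤ y₀ := by
          have := ht.2
          rw [le_div_iff₀ hε] at this
          linarith
        nlinarith [ht.1, hT0]
      have h2' := int_exp_neg_mul (y₀/2) (by positivity) T (y₀/ε)
      have h3 : (Real.exp (-(y₀/2 * T)) - Real.exp (-(y₀/2 * (y₀/ε)))) / (y₀/2)
          ≤ Real.exp (-(y₀/2 * T)) / (y₀/2) :=
        (div_le_div_iff_of_pos_right (by linarith)).mpr
          (sub_le_self _ (Real.exp_nonneg _))
      calc _ ≤ _ := h1
        _ = _ := h2'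
        _ ≤ _ := h3
        _ = 2 * Real.exp (-(y₀/2 * T)) / y₀ := by field_simp
    have hC0 : 0 ≤ ∫ t in (0:ℝ)..ε, Real.exp (ε * t ^ 2 / 2 - y₀ * t) :=
      intervalIntegral.integral_nonneg hε.le (fun t _ => Real.exp_nonneg _)
    rw [hGsplit]
    linarith
end

section
/- Let y₀ > 0 and 0 < x₀ < y₀/2, and fix c with 0 < c < 2. Define, for ε > 0, Y_ε(t) = −ε t²/2 + y₀ t and x_ε(t) = x₀ exp(−Y_ε(t)) / (1 − x₀ ∫₀ᵗ exp(−Y_ε(u)) du). Then there exists ε₀ > 0 such that for all 0 < ε < ε₀: the denominator 1 − x₀ ∫₀ᵗ exp(−Y_ε(u)) du is positive for all t ∈ [0, c·y₀/ε], and x_ε(c·y₀/ε) < x₀. (Thus, despite the repulsiveness of the half-axis {x = 0, y < 0}, the orbit of ẋ = −yx + x², ẏ = −ε starting at (x₀, y₀) remains within x₀ of x = 0 for a time of order y₀/ε after crossing y = 0: this is the delay to bifurcation.) -/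
open Real Set intervalIntegral

set_option maxHeartbeats 1000000

/-- `exp (-x) ≤ 4 / x ^ 2` for `x > 0`. -/
lemma aux_exp_neg_le_four_div_sq (x : ℝ) (hx : 0 < x) : Real.exp (-x) ≤ 4 / x ^ 2 := by
  have h2 : x / 2 + 1 ≤ Real.exp (x / 2) := Real.add_one_le_exp _
  have hq : x ^ 2 / 4 ≤ Real.exp x := by
    have : Real.exp (x / 2) * Real.exp (x / 2) = Real.exp x := by
      rw [← Real.exp_add]; ring_nf
    nlinarith [Real.exp_pos (x / 2)]
  have hq4 : 0 < x ^ 2 / 4 := by positivity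
  rw [Real.exp_neg]
  calc (Real.exp x)⁻¹ ≤ (x ^ 2 / 4)⁻¹ := by
        apply inv_anti₀ hq4 hq
    _ = 4 / x ^ 2 := by field_simp

/-- `exp (-x) ≤ 1 / x` for `x > 0`. -/
lemma aux_exp_neg_le_one_div (x : ℝ) (hx : 0 < x) : Real.exp (-x) ≤ 1 / x := by
  have h : x ≤ Real.exp x := by
    have := Real.add_one_le_exp x; linarith
  rw [Real.exp_neg]
  calc (Real.exp x)⁻¹ ≤ x⁻¹ := inv_anti₀ hx h
    _ = 1 / x := (one_div x).symm

/-- Delay to bifurcation for the transcritical dynamical bifurcation: for small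
`ε`, the Bernoulli solution starting at `(x₀, y₀)` with `0 < x₀ < y₀ / 2`
satisfies `x_ε(c y₀ / ε) < x₀` for `0 < c < 2`, the denominator staying
positive on `[0, c y₀ / ε]`. -/
theorem transcritical_delay_to_bifurcation
    (x₀ y₀ c : ℝ) (hy₀ : 0 < y₀) (hx₀ : 0 < x₀) (hx₀' : x₀ < y₀ / 2)
    (hc : 0 < c) (hc' : c < 2)
    (Y : ℝ → ℝ → ℝ) (hY : ∀ ε t, Y ε t = -ε * t ^ 2 / 2 + y₀ * t)
    (x : ℝ → ℝ → ℝ)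
    (hx : ∀ ε t, x ε t =
      x₀ * Real.exp (-Y ε t) / (1 - x₀ * ∫ u in (0 : ℝ)..t, Real.exp (-Y ε u))) :
    ∃ ε₀ > 0, ∀ ε : ℝ, 0 < ε → ε < ε₀ →
      (∀ t ∈ Set.Icc (0 : ℝ) (c * y₀ / ε),
        0 < 1 - x₀ * ∫ u in (0 : ℝ)..t, Real.exp (-Y ε u)) ∧
      x ε (c * y₀ / ε) < x₀ := by
  set δ : ℝ := min (y₀ - 2 * x₀) (c * y₀) with hδdef
  have hδpos : 0 < δ := by rw [hδdef]; exact lt_min (by linarith) (by positivity)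
  have hδ1 : δ ≤ y₀ - 2 * x₀ := by rw [hδdef]; exact min_le_left _ _
  have hδ2 : δ ≤ c * y₀ := by rw [hδdef]; exact min_le_right _ _
  clear_value δ
  set a : ℝ := y₀ - δ / 2 with hadef
  clear_value a
  have ha : x₀ + y₀ / 2 ≤ a := by rw [hadef]; linarith
  have hapos : 0 < a := by linarith
  have hden : (0:ℝ) < x₀ + y₀ / 2 := by linarith
  set κ : ℝ := 1 - x₀ / (x₀ + y₀ / 2) with hκdef
  clear_value κ
  have hκpos : 0 < κ := by
    have h : x₀ / (x₀ + y₀ / 2) < 1 := (div_lt_one hden).2 (by linarith)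
    rw [hκdef]; linarith
  have hκlt1 : κ < 1 := by
    have h : 0 < x₀ / (x₀ + y₀ / 2) := by positivity
    rw [hκdef]; linarith
  have hxa : x₀ / a ≤ 1 - κ := by
    have h1 : x₀ / a ≤ x₀ / (x₀ + y₀ / 2) :=
      div_le_div_of_nonneg_left hx₀.le hden ha
    rw [hκdef]; linarith
  set m : ℝ := δ * y₀ * (1 - c / 2) with hmdef
  clear_value m
  have hm : 0 < m := by
    rw [hmdef]; exact mul_pos (mul_pos hδpos hy₀) (by linarith)
  set M : ℝ := c * y₀ ^ 2 * (1 - c / 2) with hMdef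
  clear_value M
  have hM : 0 < M := by
    rw [hMdef]; exact mul_pos (by positivity) (by linarith)
  refine ⟨min (κ * m ^ 2 / (8 * x₀ * c * y₀)) (M * κ / 4),
    lt_min (by positivity) (by positivity), ?_⟩
  intro ε hε hεε
  have hε1 : ε < κ * m ^ 2 / (8 * x₀ * c * y₀) := hεε.trans_le (min_le_left _ _)
  have hε2 : ε < M * κ / 4 := hεε.trans_le (min_le_right _ _)
  set T : ℝ := c * y₀ / ε with hTdef
  set S : ℝ := δ / ε with hSdef
  have hTpos : 0 < T := by rw [hTdef]; positivity
  have hS0 : 0 ≤ S := by rw [hSdef]; positivity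
  have hST : S ≤ T := by rw [hSdef, hTdef]; gcongr
  have hεT : ε * T = c * y₀ := by rw [hTdef]; field_simp
  have hεS : ε * S = δ := by rw [hSdef]; field_simp
  clear_value T S
  have hcont : Continuous (fun u => Real.exp (-Y ε u)) := by
    simp only [hY]; fun_prop
  have hInt : ∀ p q : ℝ, IntervalIntegrable (fun u => Real.exp (-Y ε u))
      MeasureTheory.volume p q := fun p q => hcont.intervalIntegrable p q
  -- bound on [0, S]
  have h1 : (∫ u in (0:ℝ)..S, Real.exp (-Y ε u)) ≤ 1 / a := by
    have hmono : (∫ u in (0:ℝ)..S, Real.exp (-Y ε u))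
        ≤ ∫ u in (0:ℝ)..S, Real.exp (-a * u) := by
      apply intervalIntegral.integral_mono_on hS0 (hInt 0 S)
        ((by fun_prop : Continuous fun u : ℝ => Real.exp (-a * u)).intervalIntegrable 0 S)
      intro u hu
      apply Real.exp_le_exp.2
      rw [hY, hadef]
      have hu0 : 0 ≤ u := hu.1
      have huS : ε * u ≤ δ := by
        calc ε * u ≤ ε * S := by nlinarith [hu.2]
          _ = δ := hεS
      nlinarith
    have ha0 : a ≠ 0 := hapos.ne'
    have hval : (∫ u in (0:ℝ)..S, Real.exp (-a * u)) = (1 - Real.exp (-a * S)) / a := by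
      have h := intervalIntegral.integral_comp_mul_left (fun x => Real.exp x)
        (c := -a) (a := (0:ℝ)) (b := S) (by simpa using ha0)
      rw [h, integral_exp, mul_zero, Real.exp_zero, smul_eq_mul, inv_neg]
      field_simp
      ring
    rw [hval] at hmono
    refine hmono.trans ?_
    have hnum : 1 - Real.exp (-a * S) ≤ 1 := by
      have := Real.exp_pos (-a * S); linarith
    exact div_le_div_of_nonneg_right hnum hapos.le |>.trans_eq rfl
  -- bound on [S, T]
  have h2 : (∫ u in S..T, Real.exp (-Y ε u)) ≤ T * Real.exp (-(m / ε)) := by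
    have hmono : (∫ u in S..T, Real.exp (-Y ε u))
        ≤ ∫ _ in S..T, Real.exp (-(m / ε)) := by
      apply intervalIntegral.integral_mono_on hST (hInt S T)
        (intervalIntegrable_const)
      intro u hu
      apply Real.exp_le_exp.2
      rw [hY]
      have huS : δ ≤ ε * u := by
        calc δ = ε * S := hεS.symm
          _ ≤ ε * u := by nlinarith [hu.1]
      have huT : ε * u ≤ c * y₀ := by
        calc ε * u ≤ ε * T := by nlinarith [hu.2]
          _ = c * y₀ := hεT
      have key : m ≤ (ε * u) * (y₀ - ε * u / 2) := by
        have hA : (0:ℝ) ≤ y₀ * (1 - c / 2) := by nlinarith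
        have hB : y₀ * (1 - c / 2) ≤ y₀ - ε * u / 2 := by nlinarith
        calc m = δ * (y₀ * (1 - c / 2)) := by rw [hmdef]; ring
          _ ≤ (ε * u) * (y₀ - ε * u / 2) :=
            mul_le_mul huS hB hA (le_trans hδpos.le huS)
      have key2 : m / ε ≤ -ε * u ^ 2 / 2 + y₀ * u := by
        rw [div_le_iff₀ hε]
        nlinarith [key]
      linarith
    rw [intervalIntegral.integral_const, smul_eq_mul] at hmono
    refine hmono.trans ?_
    have := Real.exp_pos (-(m / ε))
    nlinarith
  -- total bound
  have hsplit : (∫ u in (0:ℝ)..T, Real.exp (-Y ε u))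
      = (∫ u in (0:ℝ)..S, Real.exp (-Y ε u)) + ∫ u in S..T, Real.exp (-Y ε u) :=
    (intervalIntegral.integral_add_adjacent_intervals (hInt 0 S) (hInt S T)).symm
  have htail : x₀ * (T * Real.exp (-(m / ε))) < κ / 2 := by
    have hexp : Real.exp (-(m / ε)) ≤ 4 * ε ^ 2 / m ^ 2 := by
      have h := aux_exp_neg_le_four_div_sq (m / ε) (by positivity)
      have h4 : 4 / (m / ε) ^ 2 = 4 * ε ^ 2 / m ^ 2 := by
        rw [div_pow, div_div_eq_mul_div]
      rw [h4] at h
      exact h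
    have hP : (0:ℝ) < 8 * x₀ * c * y₀ := by positivity
    have h8 : ε * (8 * x₀ * c * y₀) < κ * m ^ 2 := (lt_div_iff₀ hP).1 hε1
    have hfinal : 4 * x₀ * c * y₀ * ε / m ^ 2 < κ / 2 := by
      rw [div_lt_div_iff₀ (by positivity) (by norm_num : (0:ℝ) < 2)]
      nlinarith
    calc x₀ * (T * Real.exp (-(m / ε))) = x₀ * T * Real.exp (-(m / ε)) := by ring
      _ ≤ x₀ * T * (4 * ε ^ 2 / m ^ 2) :=
          mul_le_mul_of_nonneg_left hexp (by positivity)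
      _ = 4 * x₀ * c * y₀ * ε / m ^ 2 := by
          rw [hTdef]; field_simp
      _ < κ / 2 := hfinal
  have hIT : x₀ * (∫ u in (0:ℝ)..T, Real.exp (-Y ε u)) < 1 - κ / 2 := by
    rw [hsplit]
    have hsum : x₀ * ((∫ u in (0:ℝ)..S, Real.exp (-Y ε u)) + ∫ u in S..T, Real.exp (-Y ε u))
        ≤ x₀ * (1 / a) + x₀ * (T * Real.exp (-(m / ε))) := by nlinarith [h1, h2, hx₀.le]
    have hxa' : x₀ * (1 / a) ≤ 1 - κ := by
      rw [mul_one_div]; exact hxa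
    linarith
  have hmonoT : ∀ t ∈ Set.Icc (0:ℝ) T,
      (∫ u in (0:ℝ)..t, Real.exp (-Y ε u)) ≤ ∫ u in (0:ℝ)..T, Real.exp (-Y ε u) := by
    intro t ht
    exact intervalIntegral.integral_mono_interval le_rfl ht.1 ht.2
      (MeasureTheory.ae_of_all _ fun u => (Real.exp_pos _).le) (hInt 0 T)
  have hdenom : ∀ t ∈ Set.Icc (0:ℝ) T,
      0 < 1 - x₀ * ∫ u in (0:ℝ)..t, Real.exp (-Y ε u) := by
    intro t ht
    have h := hmonoT t ht
    have h' : x₀ * (∫ u in (0:ℝ)..t, Real.exp (-Y ε u)) < 1 - κ / 2 := by nlinarith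
    linarith
  refine ⟨hdenom, ?_⟩
  rw [hx]
  have hDT : κ / 2 < 1 - x₀ * ∫ u in (0:ℝ)..T, Real.exp (-Y ε u) := by linarith
  have hDTpos : 0 < 1 - x₀ * ∫ u in (0:ℝ)..T, Real.exp (-Y ε u) := by linarith
  rw [div_lt_iff₀ hDTpos]
  have hYT : Y ε T = M / ε := by
    rw [hY, hTdef, hMdef]
    field_simp
    ring
  have hexpT : Real.exp (-Y ε T) < κ / 2 := by
    rw [hYT]
    have h1 : Real.exp (-(M / ε)) ≤ 1 / (M / ε) := aux_exp_neg_le_one_div _ (by positivity)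
    have h2 : 1 / (M / ε) = ε / M := by
      rw [one_div, inv_div]
    rw [h2] at h1
    have h3 : ε / M < κ / 4 := by
      rw [div_lt_div_iff₀ hM (by norm_num : (0:ℝ) < 4)]
      linarith
    linarith
  nlinarith [hexpT, hDT, hx₀]
end

section
/- Let ε > 0 and define Φ(u, y) = (1/2)(tanh u − y)² + ε·ln(cosh u). If (u, y) : I → ℝ² is a differentiable solution of u'(t) = tanh(u(t)) − y(t), y'(t) = ε·tanh(u(t)) on an interval I, then for every t ∈ I, d/dt [Φ(u(t), y(t))] = (u'(t)/cosh(u(t)))². In particular t ↦ Φ(u(t), y(t)) is monotone nondecreasing along every solution (Φ is a Lyapunov-type function for the flow). -/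
open Real Set

/-- The Lyapunov function for the system `u̇ = tanh u - y, ẏ = ε tanh u`. -/
noncomputable def PhiLyap (ε u y : ℝ) : ℝ :=
  (1 / 2) * (Real.tanh u - y) ^ 2 + ε * Real.log (Real.cosh u)

lemma phi_algebra (C S d y ε : ℝ) (hC : C ≠ 0) (h1 : C ^ 2 - S ^ 2 = 1) :
    (d / C) ^ 2 =
    (1 / 2) * (2 * d ^ 1 * ((C * d * C - S * (S * d)) / C ^ 2 - ε * (S / C)))
      + ε * (S * d / C) := by
  field_simp
  linear_combination (-d ^ 2) * h1

/-- Along every solution of `u̇ = tanh u - y, ẏ = ε tanh u`, the function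
`Φ(u, y) = ½ (tanh u - y)² + ε ln(cosh u)` has derivative `(u' / cosh u)²`,
hence is monotone nondecreasing. -/
theorem Phi_lyapunov
    (ε : ℝ) (hε : 0 < ε) (I : Set ℝ) (hI : I.OrdConnected) (u y : ℝ → ℝ)
    (hu : ∀ t ∈ I, HasDerivAt u (Real.tanh (u t) - y t) t)
    (hy : ∀ t ∈ I, HasDerivAt y (ε * Real.tanh (u t)) t) :
    (∀ t ∈ I,
      HasDerivAt (fun s => PhiLyap ε (u s) (y s))
        (((Real.tanh (u t) - y t) / Real.cosh (u t)) ^ 2) t) ∧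
    MonotoneOn (fun t => PhiLyap ε (u t) (y t)) I := by
  have key : ∀ t ∈ I,
      HasDerivAt (fun s => PhiLyap ε (u s) (y s))
        (((Real.tanh (u t) - y t) / Real.cosh (u t)) ^ 2) t := by
    intro t ht
    have hc : Real.cosh (u t) ≠ 0 := (Real.cosh_pos (u t)).ne'
    set d := Real.tanh (u t) - y t with hd
    have hS : HasDerivAt (fun s => Real.sinh (u s)) (Real.cosh (u t) * d) t :=
      (Real.hasDerivAt_sinh (u t)).comp t (hu t ht)
    have hC : HasDerivAt (fun s => Real.cosh (u s)) (Real.sinh (u t) * d) t :=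
      (Real.hasDerivAt_cosh (u t)).comp t (hu t ht)
    have htanh : HasDerivAt (fun s => Real.tanh (u s))
        ((Real.cosh (u t) * d * Real.cosh (u t) -
          Real.sinh (u t) * (Real.sinh (u t) * d)) / Real.cosh (u t) ^ 2) t := by
      have := hS.div hC hc
      have heq : (fun s => Real.sinh (u s) / Real.cosh (u s))
          = fun s => Real.tanh (u s) :=
        funext fun s => (Real.tanh_eq_sinh_div_cosh _).symm
      rw [← heq]; exact this
    have hlog : HasDerivAt (fun s => Real.log (Real.cosh (u s)))
        (Real.sinh (u t) * d / Real.cosh (u t)) t := hC.log hc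
    have hdiff : HasDerivAt (fun s => Real.tanh (u s) - y s)
        ((Real.cosh (u t) * d * Real.cosh (u t) -
          Real.sinh (u t) * (Real.sinh (u t) * d)) / Real.cosh (u t) ^ 2
          - ε * Real.tanh (u t)) t := htanh.sub (hy t ht)
    have hfull := ((hdiff.pow 2).const_mul (1 / 2)).add (hlog.const_mul ε)
    simp only [PhiLyap]
    refine HasDerivAt.congr_deriv hfull ?_; symm
    simp only [← hd]
    rw [Real.tanh_eq_sinh_div_cosh]
    have h1 : Real.cosh (u t) ^ 2 - Real.sinh (u t) ^ 2 = 1 := by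
      have := Real.cosh_sq_sub_sinh_sq (u t); linarith
    exact phi_algebra (Real.cosh (u t)) (Real.sinh (u t)) d (y t) ε hc h1
  refine ⟨key, ?_⟩
  have hconv : Convex ℝ I := hI.convex
  apply monotoneOn_of_deriv_nonneg hconv
  · exact fun t ht => ((key t ht).continuousAt).continuousWithinAt
  · exact fun t ht => ((key t (interior_subset ht)).differentiableAt).differentiableWithinAt
  · intro t ht
    rw [(key t (interior_subset ht)).deriv]
    positivity
end

section
/- Let ε > 0 and define w(x, y) = (x − y)² − ε·ln|1 − x²|. If (x, y) : I → ℝ² is a differentiable solution of x'(t) = (1 − x(t)²)(x(t) − y(t)), y'(t) = ε·x(t) on an interval I with |x(t)| < 1 for all t ∈ I, then for every t ∈ I, d/dt [w(x(t), y(t))] = 2(1 − x(t)²)(x(t) − y(t))². In particular t ↦ w(x(t), y(t)) is monotone nondecreasing along solutions in the strip |x| < 1. -/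
open Real Set

/-- The Lyapunov function `w(x, y) = (x - y)² - ε ln|1 - x²|` for the slow-fast
system `ẋ = (1 - x²)(x - y), ẏ = ε x`. -/
noncomputable def wLyap (ε x y : ℝ) : ℝ :=
  (x - y) ^ 2 - ε * Real.log |1 - x ^ 2|

/-- Along every solution of `ẋ = (1 - x²)(x - y), ẏ = ε x` in the strip
`|x| < 1`, the function `w(x, y) = (x - y)² - ε ln|1 - x²|` has derivative
`2 (1 - x²)(x - y)²`, hence is monotone nondecreasing. -/
theorem w_lyapunov
    (ε : ℝ) (hε : 0 < ε) (I : Set ℝ) (hI : I.OrdConnected) (x y : ℝ → ℝ)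
    (hx : ∀ t ∈ I, HasDerivAt x ((1 - x t ^ 2) * (x t - y t)) t)
    (hy : ∀ t ∈ I, HasDerivAt y (ε * x t) t)
    (hstrip : ∀ t ∈ I, |x t| < 1) :
    (∀ t ∈ I,
      HasDerivAt (fun s => wLyap ε (x s) (y s))
        (2 * (1 - x t ^ 2) * (x t - y t) ^ 2) t) ∧
    MonotoneOn (fun t => wLyap ε (x t) (y t)) I := by
  have hpos : ∀ t ∈ I, 0 < 1 - x t ^ 2 := by
    intro t ht
    have h := abs_lt.mp (hstrip t ht)
    nlinarith [h.1, h.2]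
  have key : ∀ t ∈ I,
      HasDerivAt (fun s => wLyap ε (x s) (y s))
        (2 * (1 - x t ^ 2) * (x t - y t) ^ 2) t := by
    intro t ht
    have hne : 1 - x t ^ 2 ≠ 0 := ne_of_gt (hpos t ht)
    have h1 : HasDerivAt (fun s => (x s - y s) ^ 2)
        (2 * (x t - y t) ^ 1 * ((1 - x t ^ 2) * (x t - y t) - ε * x t)) t :=
      ((hx t ht).sub (hy t ht)).pow 2
    have hinner : HasDerivAt (fun s => 1 - x s ^ 2)
        (0 - 2 * x t ^ 1 * ((1 - x t ^ 2) * (x t - y t))) t :=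
      (hasDerivAt_const t (1 : ℝ)).sub ((hx t ht).pow 2)
    have h2 : HasDerivAt (fun s => Real.log (1 - x s ^ 2))
        ((0 - 2 * x t ^ 1 * ((1 - x t ^ 2) * (x t - y t))) / (1 - x t ^ 2)) t :=
      hinner.log hne
    have h3 := h1.sub (h2.const_mul ε)
    have heq : (fun s => wLyap ε (x s) (y s)) =
        fun s => (x s - y s) ^ 2 - ε * Real.log (1 - x s ^ 2) := by
      funext s
      simp [wLyap, Real.log_abs]
    rw [heq]
    refine h3.congr_deriv ?_
    field_simp
    ring
  refine ⟨key, ?_⟩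
  have hconv : Convex ℝ I := hI.convex
  apply monotoneOn_of_deriv_nonneg hconv
  · exact fun t ht => (key t ht).continuousAt.continuousWithinAt
  · exact fun t ht => (key t (interior_subset ht)).differentiableAt.differentiableWithinAt
  · intro t ht
    have ht' := interior_subset ht
    rw [(key t ht').deriv]
    have := hpos t ht'
    positivity
end

section
/- Let ε > 0 and let (u, y) : [0, ∞) → ℝ² be a global differentiable solution of u'(t) = tanh(u(t)) − y(t), y'(t) = ε·tanh(u(t)) with (u(0), y(0)) ≠ (0, 0). Then both the set {t ≥ 0 : u(t) = 0} and the set {t ≥ 0 : y(t) = tanh(u(t))} are unbounded; i.e., the orbit intersects the axis u = 0 and the curve y = tanh u at arbitrarily large times. -/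
open Real Set

private lemma tanh_hasDerivAt (x : ℝ) : HasDerivAt Real.tanh (1 / Real.cosh x ^ 2) x := by
  have h := (Real.hasDerivAt_sinh x).div (Real.hasDerivAt_cosh x) (Real.cosh_pos x).ne'
  have he : Real.tanh = fun x => Real.sinh x / Real.cosh x := by
    funext z; exact Real.tanh_eq_sinh_div_cosh z
  rw [show Real.sinh / Real.cosh = Real.tanh from he.symm] at h
  convert h using 1 <;> try rfl
  have := Real.cosh_sq_sub_sinh_sq x
  congr 1
  nlinarith [this]

private lemma tanh_cont : Continuous Real.tanh :=
  continuous_iff_continuousAt.2 fun x => (tanh_hasDerivAt x).differentiableAt.continuousAt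

private lemma tanh_sm : StrictMono Real.tanh := by
  apply strictMono_of_deriv_pos
  intro x
  rw [(tanh_hasDerivAt x).deriv]
  positivity

private lemma tanh_pos' {x : ℝ} (hx : 0 < x) : 0 < Real.tanh x := by
  have := tanh_sm hx
  rwa [Real.tanh_zero] at this

private lemma tanh_lt_one' (x : ℝ) : Real.tanh x < 1 := by
  rw [Real.tanh_eq_sinh_div_cosh, div_lt_one (Real.cosh_pos x)]
  nlinarith [Real.cosh_sub_sinh x, Real.exp_pos (-x)]

/-- Key lemma: a solution cannot stay in `u > 0` forever. -/
private lemma no_pos (ε : ℝ) (hε : 0 < ε) (u y : ℝ → ℝ) (T : ℝ)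
    (hu : ∀ t ∈ Set.Ici T, HasDerivAt u (Real.tanh (u t) - y t) t)
    (hy : ∀ t ∈ Set.Ici T, HasDerivAt y (ε * Real.tanh (u t)) t)
    (hpos : ∀ t ∈ Set.Ici T, 0 < u t) : False := by
  have hucont : ContinuousOn u (Ici T) := fun t ht =>
    (hu t ht).continuousAt.continuousWithinAt
  have hycont : ContinuousOn y (Ici T) := fun t ht =>
    (hy t ht).continuousAt.continuousWithinAt
  -- y is monotone on [T, ∞)
  have ymono : MonotoneOn y (Ici T) := by
    apply monotoneOn_of_deriv_nonneg (convex_Ici T) hycont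
    · exact fun t ht => (hy t (interior_subset ht)).differentiableAt.differentiableWithinAt
    · intro t ht
      rw [interior_Ici] at ht
      rw [(hy t (Ioi_subset_Ici_self ht)).deriv]
      exact le_of_lt (mul_pos hε (tanh_pos' (hpos t (Ioi_subset_Ici_self ht))))
  -- there is a time where tanh (u t) < y t
  have hstep2 : ∃ t₃ ∈ Ici T, Real.tanh (u t₃) < y t₃ := by
    by_contra hcase
    push_neg at hcase
    -- then u' ≥ 0, u monotone
    have humono : MonotoneOn u (Ici T) := by
      apply monotoneOn_of_deriv_nonneg (convex_Ici T) hucont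
      · exact fun t ht => (hu t (interior_subset ht)).differentiableAt.differentiableWithinAt
      · intro t ht
        rw [interior_Ici] at ht
        rw [(hu t (Ioi_subset_Ici_self ht)).deriv]
        exact sub_nonneg.2 (hcase t (Ioi_subset_Ici_self ht))
    set c := Real.tanh (u T) with hc_def
    have hc : 0 < c := tanh_pos' (hpos T (mem_Ici.2 le_rfl))
    have htanhge : ∀ t ∈ Ici T, c ≤ Real.tanh (u t) := fun t ht =>
      tanh_sm.monotone (humono self_mem_Ici ht ht)
    -- y grows linearly
    have hz : MonotoneOn (fun t => y t - ε * c * t) (Ici T) := by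
      have hd : ∀ t ∈ Ici T, HasDerivAt (fun t => y t - ε * c * t)
          (ε * Real.tanh (u t) - ε * c) t := by
        intro t ht
        have h1 : HasDerivAt (fun t : ℝ => ε * c * t) (ε * c) t := by
          simpa using (hasDerivAt_id t).const_mul (ε * c)
        exact (hy t ht).sub h1
      apply monotoneOn_of_deriv_nonneg (convex_Ici T)
        (fun t ht => (hd t ht).continuousAt.continuousWithinAt)
      · exact fun t ht => (hd t (interior_subset ht)).differentiableAt.differentiableWithinAt
      · intro t ht
        rw [interior_Ici] at ht
        rw [(hd t (Ioi_subset_Ici_self ht)).deriv]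
        have := htanhge t (Ioi_subset_Ici_self ht)
        nlinarith
    set t₄ := T + (2 + |y T|) / (ε * c) with ht₄_def
    have hεc : 0 < ε * c := mul_pos hε hc
    have hT4 : T ≤ t₄ := by
      have h : 0 < (2 + |y T|) / (ε * c) := by positivity
      rw [ht₄_def]; linarith
    have h1 := hz self_mem_Ici hT4 hT4
    have h2 : y t₄ ≥ y T + 2 + |y T| := by
      have : ε * c * t₄ = ε * c * T + (2 + |y T|) := by
        rw [ht₄_def]; field_simp
      simp only at h1
      nlinarith
    have h3 := hcase t₄ hT4
    have h4 := tanh_lt_one' (u t₄)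
    have h5 := abs_nonneg (y T)
    have h6 := neg_abs_le (y T)
    linarith
  obtain ⟨t₃, ht₃T, hlt3⟩ := hstep2
  -- g := tanh ∘ u - y stays negative on [t₃, ∞)
  have hS : ∀ t ∈ Ici t₃, Real.tanh (u t) - y t < 0 := by
    by_contra hns
    push_neg at hns
    obtain ⟨t₄, ht₄3, hg4⟩ := hns
    set G : ℝ → ℝ := fun t => Real.tanh (u (max t t₃)) - y (max t t₃) with hG_def
    have hGcont : Continuous G := by
      rw [continuous_iff_continuousAt]
      intro x
      have hm : T ≤ max x t₃ := le_trans ht₃T (le_max_right _ _)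
      have hmx : ContinuousAt (fun t : ℝ => max t t₃) x :=
        (continuous_id.max continuous_const).continuousAt
      have houter : ContinuousAt (fun s => Real.tanh (u s) - y s) (max x t₃) :=
        (tanh_cont.continuousAt.comp (hu _ hm).differentiableAt.continuousAt).sub
          (hy _ hm).differentiableAt.continuousAt
      exact ContinuousAt.comp' (f := fun t : ℝ => max t t₃) (x := x) houter hmx
    set S := Ici t₃ ∩ G ⁻¹' (Ici 0) with hS_def
    have hSclosed : IsClosed S := isClosed_Ici.inter (isClosed_Ici.preimage hGcont)
    have hSne : S.Nonempty := by
      refine ⟨t₄, ht₄3, ?_⟩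
      simp only [mem_preimage, mem_Ici, hG_def, max_eq_left (show t₃ ≤ t₄ from ht₄3)]
      exact hg4
    have hSbdd : BddBelow S := ⟨t₃, fun x hx => hx.1⟩
    set τ := sInf S with hτ_def
    have hτS : τ ∈ S := hSclosed.csInf_mem hSne hSbdd
    have hτ3 : t₃ ≤ τ := hτS.1
    have hGτ : 0 ≤ Real.tanh (u τ) - y τ := by
      have := hτS.2
      simpa [hG_def, max_eq_left hτ3] using this
    have hτne : t₃ < τ := by
      rcases eq_or_lt_of_le hτ3 with h | h
      · exfalso; rw [← h] at hGτ; linarith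
      · exact h
    have hless : ∀ t ∈ Ico t₃ τ, Real.tanh (u t) - y t < 0 := by
      intro t ht
      have hnot : t ∉ S := notMem_of_lt_csInf ht.2 hSbdd
      by_contra hge
      push_neg at hge
      exact hnot ⟨ht.1, by simpa [hG_def, max_eq_left ht.1] using hge⟩
    have hsub : Icc t₃ τ ⊆ Ici T := fun s hs => le_trans ht₃T hs.1
    have uanti : StrictAntiOn u (Icc t₃ τ) := by
      apply strictAntiOn_of_deriv_neg (convex_Icc t₃ τ) (hucont.mono hsub)
      intro t ht
      rw [interior_Icc] at ht
      rw [(hu t (le_trans ht₃T ht.1.le)).deriv]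
      exact hless t ⟨ht.1.le, ht.2⟩
    have hu1 : u τ < u t₃ := uanti (left_mem_Icc.2 hτ3) (right_mem_Icc.2 hτ3) hτne
    have hy1 : y t₃ ≤ y τ := ymono ht₃T (le_trans ht₃T hτ3) hτ3
    have := tanh_sm hu1
    linarith
  -- quantitative decay
  set δ := y t₃ - Real.tanh (u t₃) with hδ_def
  have hδ : 0 < δ := by simp only [hδ_def]; linarith
  have hsub3 : Ici t₃ ⊆ Ici T := Ici_subset_Ici.2 ht₃T
  have uanti : AntitoneOn u (Ici t₃) := by
    apply antitoneOn_of_deriv_nonpos (convex_Ici t₃) (hucont.mono hsub3)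
    · exact fun t ht => (hu t (hsub3 (interior_subset ht))).differentiableAt.differentiableWithinAt
    · intro t ht
      rw [interior_Ici] at ht
      rw [(hu t (hsub3 (Ioi_subset_Ici_self ht))).deriv]
      exact le_of_lt (hS t (Ioi_subset_Ici_self ht))
  have hgap : ∀ t ∈ Ici t₃, Real.tanh (u t) - y t ≤ -δ := by
    intro t ht
    have h1 : u t ≤ u t₃ := uanti self_mem_Ici ht ht
    have h2 : Real.tanh (u t) ≤ Real.tanh (u t₃) := tanh_sm.monotone h1
    have h3 : y t₃ ≤ y t := ymono ht₃T (hsub3 ht) ht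
    simp only [hδ_def]; linarith
  -- φ t = u t + δ t is antitone on [t₃, ∞)
  have hφd : ∀ t ∈ Ici t₃, HasDerivAt (fun t => u t + δ * t)
      (Real.tanh (u t) - y t + δ) t := by
    intro t ht
    have h1 : HasDerivAt (fun t : ℝ => δ * t) δ t := by
      simpa using (hasDerivAt_id t).const_mul δ
    exact (hu t (hsub3 ht)).add h1
  have hφ : AntitoneOn (fun t => u t + δ * t) (Ici t₃) := by
    apply antitoneOn_of_deriv_nonpos (convex_Ici t₃)
      (fun t ht => (hφd t ht).continuousAt.continuousWithinAt)
    · exact fun t ht => (hφd t (interior_subset ht)).differentiableAt.differentiableWithinAt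
    · intro t ht
      rw [interior_Ici] at ht
      rw [(hφd t (Ioi_subset_Ici_self ht)).deriv]
      have := hgap t (Ioi_subset_Ici_self ht)
      linarith
  set t₅ := t₃ + (u t₃ + 1) / δ with ht₅_def
  have hupos : 0 < u t₃ := hpos t₃ (hsub3 self_mem_Ici)
  have ht₅ : t₃ ≤ t₅ := by
    have h : 0 < (u t₃ + 1) / δ := by positivity
    rw [ht₅_def]; linarith
  have h7 := hφ self_mem_Ici ht₅ ht₅
  simp only at h7
  have h8 : δ * t₅ = δ * t₃ + (u t₃ + 1) := by
    rw [ht₅_def]; field_simp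
  have h9 : u t₅ ≤ -1 := by nlinarith
  have := hpos t₅ (hsub3 ht₅)
  linarith

/-- Every nonstationary global solution of `u̇ = tanh u - y, ẏ = ε tanh u`
intersects the axis `u = 0` and the curve `y = tanh u` at arbitrarily large
times. -/
theorem orbit_crosses_axes_unboundedly
    (ε : ℝ) (hε : 0 < ε) (u y : ℝ → ℝ)
    (hu : ∀ t ∈ Set.Ici (0 : ℝ), HasDerivAt u (Real.tanh (u t) - y t) t)
    (hy : ∀ t ∈ Set.Ici (0 : ℝ), HasDerivAt y (ε * Real.tanh (u t)) t)
    (h0 : (u 0, y 0) ≠ (0, 0)) :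
    (∀ T : ℝ, ∃ t : ℝ, 0 ≤ t ∧ T ≤ t ∧ u t = 0) ∧
    (∀ T : ℝ, ∃ t : ℝ, 0 ≤ t ∧ T ≤ t ∧ y t = Real.tanh (u t)) := by
  have part1 : ∀ T : ℝ, ∃ t : ℝ, 0 ≤ t ∧ T ≤ t ∧ u t = 0 := by
    intro T
    by_contra hcon
    push_neg at hcon
    set T' := max T 0 with hT'_def
    have hT'0 : (0:ℝ) ≤ T' := le_max_right _ _
    have hsub : Ici T' ⊆ Ici (0:ℝ) := Ici_subset_Ici.2 hT'0
    have hne : ∀ t ∈ Ici T', u t ≠ 0 := fun t ht =>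
      hcon t (le_trans hT'0 ht) (le_trans (le_max_left _ _) ht)
    have hucont : ContinuousOn u (Ici T') := fun t ht =>
      (hu t (hsub ht)).continuousAt.continuousWithinAt
    have hu' : ∀ t ∈ Ici T', HasDerivAt u (Real.tanh (u t) - y t) t := fun t ht => hu t (hsub ht)
    have hy' : ∀ t ∈ Ici T', HasDerivAt y (ε * Real.tanh (u t)) t := fun t ht => hy t (hsub ht)
    rcases (hne T' self_mem_Ici).lt_or_gt with hneg | hposT
    · -- u T' < 0 : apply no_pos to (-u, -y)
      have hall : ∀ t ∈ Ici T', 0 < -u t := by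
        intro t ht
        rcases (hne t ht).lt_or_gt with h | h
        · linarith
        · exfalso
          have hivt := intermediate_value_Icc ht (hucont.mono (Icc_subset_Ici_self))
          have h0mem : (0:ℝ) ∈ Icc (u T') (u t) := ⟨hneg.le, h.le⟩
          obtain ⟨s, hs, hus⟩ := hivt h0mem
          exact hne s (Icc_subset_Ici_self hs) hus
      apply no_pos ε hε (fun t => -u t) (fun t => -y t) T' ?_ ?_ hall
      · intro t ht
        have h := (hu' t ht).neg
        convert h using 1 <;> try rfl
        rw [Real.tanh_neg]; ring
      · intro t ht
        have h := (hy' t ht).neg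
        convert h using 1 <;> try rfl
        rw [Real.tanh_neg]; ring
    · have hall : ∀ t ∈ Ici T', 0 < u t := by
        intro t ht
        rcases (hne t ht).lt_or_gt with h | h
        · exfalso
          have hivt := intermediate_value_Icc' ht (hucont.mono (Icc_subset_Ici_self))
          have h0mem : (0:ℝ) ∈ Icc (u t) (u T') := ⟨h.le, hposT.le⟩
          obtain ⟨s, hs, hus⟩ := hivt h0mem
          exact hne s (Icc_subset_Ici_self hs) hus
        · exact h
      exact no_pos ε hε u y T' hu' hy' hall
  refine ⟨part1, ?_⟩
  intro T
  by_contra hcon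
  push_neg at hcon
  set T' := max T 0 with hT'_def
  have hT'0 : (0:ℝ) ≤ T' := le_max_right _ _
  have hsub : Ici T' ⊆ Ici (0:ℝ) := Ici_subset_Ici.2 hT'0
  have hne : ∀ t ∈ Ici T', Real.tanh (u t) - y t ≠ 0 := by
    intro t ht h
    exact hcon t (le_trans hT'0 ht) (le_trans (le_max_left _ _) ht) (by linarith [sub_eq_zero.1 h])
  have hucont : ContinuousOn u (Ici T') := fun t ht =>
    (hu t (hsub ht)).continuousAt.continuousWithinAt
  have hycont : ContinuousOn y (Ici T') := fun t ht =>
    (hy t (hsub ht)).continuousAt.continuousWithinAt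
  have hgcont : ContinuousOn (fun t => Real.tanh (u t) - y t) (Ici T') :=
    (tanh_cont.comp_continuousOn hucont).sub hycont
  -- u is injective on Ici T'
  have hinj : InjOn u (Ici T') := by
    rcases (hne T' self_mem_Ici).lt_or_gt with hneg | hpos
    · have hall : ∀ t ∈ Ici T', Real.tanh (u t) - y t < 0 := by
        intro t ht
        rcases (hne t ht).lt_or_gt with h | h
        · exact h
        · exfalso
          have hivt := intermediate_value_Icc ht (hgcont.mono (Icc_subset_Ici_self))
          obtain ⟨s, hs, hgs⟩ := hivt (⟨hneg.le, h.le⟩ : (0:ℝ) ∈ Icc _ _)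
          exact hne s (Icc_subset_Ici_self hs) hgs
      have : StrictAntiOn u (Ici T') := by
        apply strictAntiOn_of_deriv_neg (convex_Ici T') hucont
        intro t ht
        rw [interior_Ici] at ht
        rw [(hu t (hsub (Ioi_subset_Ici_self ht))).deriv]
        exact hall t (Ioi_subset_Ici_self ht)
      exact this.injOn
    · have hall : ∀ t ∈ Ici T', 0 < Real.tanh (u t) - y t := by
        intro t ht
        rcases (hne t ht).lt_or_gt with h | h
        · exfalso
          have hivt := intermediate_value_Icc' ht (hgcont.mono (Icc_subset_Ici_self))
          obtain ⟨s, hs, hgs⟩ := hivt (⟨h.le, hpos.le⟩ : (0:ℝ) ∈ Icc _ _)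
          exact hne s (Icc_subset_Ici_self hs) hgs
        · exact h
      have : StrictMonoOn u (Ici T') := by
        apply strictMonoOn_of_deriv_pos (convex_Ici T') hucont
        intro t ht
        rw [interior_Ici] at ht
        rw [(hu t (hsub (Ioi_subset_Ici_self ht))).deriv]
        exact hall t (Ioi_subset_Ici_self ht)
      exact this.injOn
  obtain ⟨t₁, ht₁0, ht₁T, hu₁⟩ := part1 T'
  obtain ⟨t₂, ht₂0, ht₂T, hu₂⟩ := part1 (t₁ + 1)
  have h₁ : t₁ ∈ Ici T' := ht₁T
  have h₂ : t₂ ∈ Ici T' := le_trans ht₁T (by linarith)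
  have := hinj h₁ h₂ (by rw [hu₁, hu₂])
  linarith
end

section
/- Let ε > 0 and let (x, y) : [s, t] → ℝ² (s < t) be a differentiable solution of x'(τ) = (1 − x(τ)²)(x(τ) − y(τ)), y'(τ) = ε·x(τ) with |x(τ)| < 1 for all τ ∈ (s, t) and x(s) = x(t) = 0. Then y(t)² − y(s)² = 2ε ∫_s^t x(τ)² dτ ≤ 2ε·(t − s). -/
open Real Set intervalIntegral

/-- Between two consecutive zeros of `x`, along a solution of
`ẋ = (1 - x²)(x - y), ẏ = ε x` in the strip `|x| < 1`, one has
`y(t)² - y(s)² = 2ε ∫_s^t x² ≤ 2ε (t - s)`. -/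
theorem y_sq_increment_between_zeros
    (ε s t : ℝ) (hε : 0 < ε) (hst : s < t) (x y : ℝ → ℝ)
    (hx : ∀ τ ∈ Set.Icc s t, HasDerivAt x ((1 - x τ ^ 2) * (x τ - y τ)) τ)
    (hy : ∀ τ ∈ Set.Icc s t, HasDerivAt y (ε * x τ) τ)
    (hstrip : ∀ τ ∈ Set.Ioo s t, |x τ| < 1)
    (hxs : x s = 0) (hxt : x t = 0) :
    y t ^ 2 - y s ^ 2 = (2 * ε * ∫ τ in s..t, x τ ^ 2) ∧
    y t ^ 2 - y s ^ 2 ≤ 2 * ε * (t - s) := by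
  have hx2 : ∀ τ ∈ Set.Icc s t, x τ ^ 2 < 1 := by
    intro τ hτ
    rcases eq_or_lt_of_le hτ.1 with h1 | h1
    · simp [← h1, hxs]
    rcases eq_or_lt_of_le hτ.2 with h2 | h2
    · simp [h2, hxt]
    · have h := hstrip τ ⟨h1, h2⟩
      nlinarith [sq_abs (x τ), abs_nonneg (x τ)]
  have hg : ∀ τ ∈ Set.Icc s t, (0:ℝ) < 1 - x τ ^ 2 := fun τ h => by
    linarith [hx2 τ h]
  set F : ℝ → ℝ := fun τ => y τ ^ 2 - ε * Real.log (1 - x τ ^ 2) with hF_def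
  have hF : ∀ τ ∈ Set.Icc s t, HasDerivAt F (2 * ε * x τ ^ 2) τ := by
    intro τ hτ
    have hgτ := hg τ hτ
    have h1 : HasDerivAt (fun τ => y τ ^ 2) (2 * y τ * (ε * x τ)) τ := by
      have := (hy τ hτ).fun_pow 2
      simpa [mul_comm, mul_assoc, mul_left_comm] using this
    have hgd : HasDerivAt (fun τ => 1 - x τ ^ 2)
        (-(2 * x τ * ((1 - x τ ^ 2) * (x τ - y τ)))) τ := by
      have := ((hx τ hτ).fun_pow 2).const_sub 1
      simpa [mul_comm, mul_assoc, mul_left_comm] using this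
    have hlog : HasDerivAt (fun τ => Real.log (1 - x τ ^ 2))
        (-(2 * x τ * ((1 - x τ ^ 2) * (x τ - y τ))) / (1 - x τ ^ 2)) τ :=
      hgd.log (ne_of_gt hgτ)
    have := h1.fun_sub (hlog.const_mul ε)
    refine this.congr_deriv ?_
    field_simp
    ring
  have hxc : ContinuousOn (fun τ => 2 * ε * x τ ^ 2) (Set.Icc s t) := by
    apply ContinuousOn.mul continuousOn_const
    exact (ContinuousOn.pow (fun τ hτ => (hx τ hτ).continuousAt.continuousWithinAt) 2)
  have hint : IntervalIntegrable (fun τ => 2 * ε * x τ ^ 2) MeasureTheory.volume s t := by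
    apply ContinuousOn.intervalIntegrable
    rwa [Set.uIcc_of_le hst.le]
  have key := intervalIntegral.integral_eq_sub_of_hasDerivAt
      (fun τ hτ => hF τ (by rwa [Set.uIcc_of_le hst.le] at hτ)) hint
  have hFs : F s = y s ^ 2 := by simp [hF_def, hxs]
  have hFt : F t = y t ^ 2 := by simp [hF_def, hxt]
  have heq : y t ^ 2 - y s ^ 2 = 2 * ε * ∫ τ in s..t, x τ ^ 2 := by
    rw [← hFt, ← hFs, ← key, ← intervalIntegral.integral_const_mul]
  refine ⟨heq, ?_⟩
  rw [heq]
  have hint2 : IntervalIntegrable (fun τ => x τ ^ 2) MeasureTheory.volume s t := by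
    apply ContinuousOn.intervalIntegrable
    rw [Set.uIcc_of_le hst.le]
    exact ContinuousOn.pow (fun τ hτ => (hx τ hτ).continuousAt.continuousWithinAt) 2
  have hmono : (∫ τ in s..t, x τ ^ 2) ≤ ∫ τ in s..t, (1:ℝ) := by
    apply intervalIntegral.integral_mono_on hst.le hint2 intervalIntegrable_const
    intro τ hτ
    exact (hx2 τ hτ).le
  have : (∫ τ in s..t, (1:ℝ)) = t - s := by simp
  nlinarith [hmono]
end

section
/- Let ε > 0 and let (x, y) : [0, ∞) → ℝ² be a global differentiable solution of x'(t) = (1 − x(t)²)(x(t) − y(t)), y'(t) = ε·x(t) with |x(0)| < 1 and (x(0), y(0)) ≠ (0, 0). Then sup_{t ≥ 0} w(x(t), y(t)) = +∞, where w(x, y) = (x − y)² − ε·ln|1 − x²|. In particular, the values |y(t_n)| at the successive zeros t_n of x form an unbounded sequence, and the orbit accumulates arbitrarily close to the lines x = −1 and x = 1. -/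
open Real Set

set_option maxHeartbeats 2000000 in
/-- Along every nonstationary global solution of
`ẋ = (1 - x²)(x - y), ẏ = ε x` starting in the strip `|x| < 1`, the Lyapunov
function `w(x, y) = (x - y)² - ε ln|1 - x²|` is unbounded above. -/
theorem w_unbounded_along_orbit
    (ε : ℝ) (hε : 0 < ε) (x y : ℝ → ℝ)
    (hx : ∀ t ∈ Set.Ici (0 : ℝ), HasDerivAt x ((1 - x t ^ 2) * (x t - y t)) t)
    (hy : ∀ t ∈ Set.Ici (0 : ℝ), HasDerivAt y (ε * x t) t)
    (hx0 : |x 0| < 1) (h0 : (x 0, y 0) ≠ (0, 0)) :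
    ∀ M : ℝ, ∃ t : ℝ, 0 ≤ t ∧
      M < (x t - y t) ^ 2 - ε * Real.log |1 - x t ^ 2| := by
  -- basic continuity
  have hxc : ∀ t ∈ Ici (0:ℝ), ContinuousAt x t := fun t ht => (hx t ht).continuousAt
  have hyc : ∀ t ∈ Ici (0:ℝ), ContinuousAt y t := fun t ht => (hy t ht).continuousAt
  set v : ℝ → ℝ := fun t => x t - y t with hvdef
  have hvc : ∀ t ∈ Ici (0:ℝ), ContinuousAt v t := fun t ht => (hxc t ht).sub (hyc t ht)
  have hv' : ∀ t ∈ Ici (0:ℝ),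
      HasDerivAt v ((1 - x t ^ 2) * v t - ε * x t) t := fun t ht => (hx t ht).sub (hy t ht)
  set z : ℝ → ℝ := fun t => 1 - x t ^ 2 with hzdef
  have hzc : ∀ t ∈ Ici (0:ℝ), ContinuousAt z t := fun t ht =>
    (continuousAt_const.sub ((hxc t ht).pow 2))
  have hz' : ∀ t ∈ Ici (0:ℝ),
      HasDerivAt z ((-2 * x t * v t) * z t) t := by
    intro t ht
    have := (hx t ht).pow 2
    have h2 : HasDerivAt z (-(2 * x t ^ (2-1) * ((1 - x t ^ 2) * (x t - y t)))) t :=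
      (this.const_sub 1)
    convert h2 using 1
    simp [hvdef, hzdef]; ring
  -- invariance of the strip: z t > 0 for all t ≥ 0
  set a : ℝ → ℝ := fun t => -2 * x t * v t with hadef
  set abar : ℝ → ℝ := fun s => a (max s 0) with habardef
  have habarc : Continuous abar := by
    rw [continuous_iff_continuousAt]
    intro s
    have hmax : ContinuousAt (fun s : ℝ => max s 0) s := (continuous_id.max continuous_const).continuousAt
    have h0le : (0:ℝ) ≤ max s 0 := le_max_right _ _
    have hca : ContinuousAt a (max s 0) := by
      exact ((continuousAt_const.mul (hxc _ h0le)).mul (hvc _ h0le))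
    exact ContinuousAt.comp (g := a) hca hmax
  have habar_eq : ∀ t ∈ Ici (0:ℝ), abar t = a t := by
    intro t ht; simp [habardef, max_eq_left (mem_Ici.mp ht)]
  set A : ℝ → ℝ := fun t => ∫ s in (0:ℝ)..t, abar s with hAdef
  have hA' : ∀ t : ℝ, HasDerivAt A (abar t) t := by
    intro t
    exact intervalIntegral.integral_hasDerivAt_right
      (habarc.intervalIntegrable _ _)
      (habarc.stronglyMeasurableAtFilter _ _)
      habarc.continuousAt
  have hz0 : 0 < z 0 := by
    have : x 0 ^ 2 < 1 := by
      have := abs_lt.mp hx0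
      nlinarith [this.1, this.2]
    simpa [hzdef] using by linarith
  have hzpos : ∀ t ∈ Ici (0:ℝ), 0 < z t := by
    intro t ht
    have ht0 : (0:ℝ) ≤ t := ht
    set g : ℝ → ℝ := fun s => z s * Real.exp (-A s) with hgdef
    have hg' : ∀ s ∈ Ici (0:ℝ), HasDerivAt g 0 s := by
      intro s hs
      have h1 : HasDerivAt (fun u => Real.exp (-A u)) (Real.exp (-A s) * (-(abar s))) s := by
        have := ((hA' s).neg).exp
        simpa using this
      have h2 : HasDerivAt g ((a s * z s) * Real.exp (-A s)
          + z s * (Real.exp (-A s) * (-(abar s)))) s := by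
        have hz'' : HasDerivAt z (a s * z s) s := by
          have := hz' s hs; simpa [hadef] using this
        exact hz''.mul h1
      have : (a s * z s) * Real.exp (-A s) + z s * (Real.exp (-A s) * (-(abar s))) = 0 := by
        rw [habar_eq s hs]; ring
      rwa [this] at h2
    have hgc : ContinuousOn g (Icc 0 t) := by
      intro s hs
      exact ((hg' s hs.1).continuousAt).continuousWithinAt
    have hconst : ∀ s ∈ Icc (0:ℝ) t, g s = g 0 :=
      constant_of_has_deriv_right_zero hgc
        (fun s hs => ((hg' s hs.1).hasDerivWithinAt))
    have hgt : g t = g 0 := hconst t ⟨ht0, le_refl t⟩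
    have hg0pos : 0 < g 0 := mul_pos hz0 (Real.exp_pos _)
    have hzt : 0 < z t * Real.exp (-A t) := by
      have : g t = z t * Real.exp (-A t) := rfl
      rw [← this, hgt]; exact hg0pos
    nlinarith [Real.exp_pos (-A t), hzt]
  -- the Lyapunov function
  set W : ℝ → ℝ := fun t => v t ^ 2 - ε * Real.log (z t) with hWdef
  have hW' : ∀ t ∈ Ici (0:ℝ), HasDerivAt W (2 * z t * v t ^ 2) t := by
    intro t ht
    have hzne : z t ≠ 0 := ne_of_gt (hzpos t ht)
    have h1 : HasDerivAt (fun u => v u ^ 2)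
        (2 * v t ^ (2-1) * ((1 - x t ^ 2) * v t - ε * x t)) t := (hv' t ht).pow 2
    have h2 : HasDerivAt (fun u => Real.log (z u))
        (((-2 * x t * v t) * z t) / z t) t := (hz' t ht).log hzne
    have h3 : HasDerivAt (fun u => v u ^ 2 - ε * Real.log (z u)) _ t := h1.sub (h2.const_mul ε)
    convert h3 using 1
    field_simp [hzdef]
    ring
  have hFTC : ∀ s t : ℝ, 0 ≤ s → s ≤ t →
      ∫ u in s..t, 2 * z u * v u ^ 2 = W t - W s := by
    intro s t hs hst
    apply intervalIntegral.integral_eq_sub_of_hasDerivAt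
    · intro u hu
      rw [uIcc_of_le hst] at hu
      exact hW' u (le_trans hs hu.1)
    · apply ContinuousOn.intervalIntegrable
      rw [uIcc_of_le hst]
      intro u hu
      exact (((continuousAt_const.mul (hzc u (le_trans hs hu.1))).mul
        ((hvc u (le_trans hs hu.1)).pow 2))).continuousWithinAt
  have hWmono : ∀ s t : ℝ, 0 ≤ s → s ≤ t → W s ≤ W t := by
    intro s t hs hst
    have h := hFTC s t hs hst
    have h2 : 0 ≤ ∫ u in s..t, 2 * z u * v u ^ 2 := by
      apply intervalIntegral.integral_nonneg hst
      intro u hu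
      have hu0 : (0:ℝ) ≤ u := le_trans hs hu.1
      nlinarith [hzpos u hu0, sq_nonneg (v u)]
    linarith [h ▸ h2]
  have hc : 0 < W 0 := by
    have hz01 : z 0 ≤ 1 := by
      show 1 - x 0 ^ 2 ≤ 1
      nlinarith [sq_nonneg (x 0)]
    have hlog0 : Real.log (z 0) ≤ 0 := Real.log_nonpos (le_of_lt hz0) hz01
    show 0 < v 0 ^ 2 - ε * Real.log (z 0)
    rcases eq_or_ne (v 0) 0 with hv0 | hv0
    · have hx0ne : x 0 ≠ 0 := by
        intro h
        apply h0
        have hy0 : y 0 = 0 := by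
          have : x 0 - y 0 = 0 := hv0
          linarith [this, h ▸ this]
        rw [h, hy0]
      have hzlt : z 0 < 1 := by
        show 1 - x 0 ^ 2 < 1
        have : 0 < x 0 ^ 2 := by positivity
        linarith
      have hlogneg : Real.log (z 0) < 0 := Real.log_neg hz0 hzlt
      rw [hv0]
      nlinarith
    · have : 0 < v 0 ^ 2 := by positivity
      nlinarith
  intro M
  by_contra hcon
  push_neg at hcon
  have hM : ∀ t, 0 ≤ t → W t ≤ M := by
    intro t ht
    have h1 := hcon t ht
    have habs : |1 - x t ^ 2| = z t := abs_of_pos (hzpos t ht)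
    show v t ^ 2 - ε * Real.log (z t) ≤ M
    rw [← habs]
    exact h1
  have hMc : W 0 ≤ M := hM 0 le_rfl
  set δ : ℝ := Real.exp (-(M/ε)) with hdeltadef
  have hδpos : 0 < δ := Real.exp_pos _
  have hzδ : ∀ t, 0 ≤ t → δ ≤ z t := by
    intro t ht
    have h1 : v t ^ 2 - ε * Real.log (z t) ≤ M := hM t ht
    have h3 : -M ≤ ε * Real.log (z t) := by nlinarith [sq_nonneg (v t)]
    have h2 : -(M/ε) ≤ Real.log (z t) := by
      rw [← neg_div, div_le_iff₀ hε]
      nlinarith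
    calc δ = Real.exp (-(M/ε)) := rfl
      _ ≤ Real.exp (Real.log (z t)) := Real.exp_le_exp.mpr h2
      _ = z t := Real.exp_log (hzpos t ht)
  have hv2M : ∀ t, 0 ≤ t → v t ^ 2 ≤ M := by
    intro t ht
    have h1 : v t ^ 2 - ε * Real.log (z t) ≤ M := hM t ht
    have hz1 : z t ≤ 1 := by show 1 - x t ^ 2 ≤ 1; nlinarith [sq_nonneg (x t)]
    have hlog : Real.log (z t) ≤ 0 := Real.log_nonpos (le_of_lt (hzpos t ht)) hz1
    nlinarith
  have hMpos : 0 < M := lt_of_lt_of_le hc hMc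
  -- integrability of v²
  have hvint : ∀ s t : ℝ, 0 ≤ s → s ≤ t →
      IntervalIntegrable (fun u => v u ^ 2) MeasureTheory.volume s t := by
    intro s t hs hst
    apply ContinuousOn.intervalIntegrable
    rw [uIcc_of_le hst]
    intro u hu
    exact ((hvc u (le_trans hs hu.1)).pow 2).continuousWithinAt
  have hzvint : ∀ s t : ℝ, 0 ≤ s → s ≤ t →
      IntervalIntegrable (fun u => 2 * z u * v u ^ 2) MeasureTheory.volume s t := by
    intro s t hs hst
    apply ContinuousOn.intervalIntegrable
    rw [uIcc_of_le hst]
    intro u hu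
    exact (((continuousAt_const.mul (hzc u (le_trans hs hu.1))).mul
      ((hvc u (le_trans hs hu.1)).pow 2))).continuousWithinAt
  set K : ℝ := (M - W 0) / (2*δ) with hKdef
  have hSbound : ∀ s t : ℝ, 0 ≤ s → s ≤ t → (∫ u in s..t, v u ^ 2) ≤ K := by
    intro s t hs hst
    have ht0 : (0:ℝ) ≤ t := le_trans hs hst
    have hmono : (∫ u in s..t, 2 * δ * v u ^ 2) ≤ ∫ u in s..t, 2 * z u * v u ^ 2 := by
      apply intervalIntegral.integral_mono_on hst
      · exact (hvint s t hs hst).const_mul (2*δ)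
      · exact hzvint s t hs hst
      · intro u hu
        have hu0 : (0:ℝ) ≤ u := le_trans hs hu.1
        nlinarith [hzδ u hu0, sq_nonneg (v u)]
    have heq : (∫ u in s..t, 2 * δ * v u ^ 2) = 2 * δ * ∫ u in s..t, v u ^ 2 :=
      intervalIntegral.integral_const_mul _ _
    have hftc := hFTC s t hs hst
    have hWt := hM t ht0
    have hWs := hWmono 0 s le_rfl hs
    rw [hKdef, le_div_iff₀ (by positivity)]
    rw [heq] at hmono
    nlinarith
  have hK0 : 0 ≤ K := by
    have := hSbound 0 0 le_rfl le_rfl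
    simpa using this
  set S : ℝ → ℝ := fun T => ∫ u in (0:ℝ)..T, v u ^ 2 with hSdef
  have hSdiff : ∀ s t : ℝ, 0 ≤ s → s ≤ t → S t - S s = ∫ u in s..t, v u ^ 2 := by
    intro s t hs hst
    have h := intervalIntegral.integral_add_adjacent_intervals
      (hvint 0 s le_rfl hs) (hvint s t hs hst)
    show (∫ u in (0:ℝ)..t, v u ^ 2) - ∫ u in (0:ℝ)..s, v u ^ 2 = _
    linarith
  set L : ℝ := sSup (S '' Ici 0) with hLdef
  have hne : (S '' Ici 0).Nonempty := ⟨S 0, ⟨0, self_mem_Ici, rfl⟩⟩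
  have hbdd : BddAbove (S '' Ici 0) := by
    refine ⟨K, ?_⟩
    rintro r ⟨T, hT, rfl⟩
    exact hSbound 0 T le_rfl hT
  have hSleL : ∀ T, 0 ≤ T → S T ≤ L := fun T hT => le_csSup hbdd ⟨T, hT, rfl⟩
  have htail : ∀ θ : ℝ, 0 < θ → ∃ T₁ : ℝ, 0 ≤ T₁ ∧
      ∀ s t, T₁ ≤ s → s ≤ t → (∫ u in s..t, v u ^ 2) ≤ θ := by
    intro θ hθ
    obtain ⟨r, ⟨T₁, hT₁, rfl⟩, hr⟩ := exists_lt_of_lt_csSup hne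
      (show L - θ < L by linarith)
    refine ⟨T₁, hT₁, fun s t hs hst => ?_⟩
    have hs0 : (0:ℝ) ≤ s := le_trans hT₁ hs
    have h1 : S T₁ ≤ S s := by
      have h2 := hSdiff T₁ s hT₁ hs
      have h3 : 0 ≤ ∫ u in T₁..s, v u ^ 2 :=
        intervalIntegral.integral_nonneg hs (fun u _ => sq_nonneg _)
      linarith
    have h3 := hSdiff s t hs0 hst
    have h4 := hSleL t (le_trans hs0 hst)
    linarith
  have hsmallv : ∀ r : ℝ, 0 < r → ∀ T₀ : ℝ, 0 ≤ T₀ → ∃ t, T₀ ≤ t ∧ v t ^ 2 < r := by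
    intro r hr T₀ hT₀
    by_contra hno
    push_neg at hno
    set T' : ℝ := T₀ + (K/r + 1) with hT'def
    have hT'ge : T₀ ≤ T' := by
      rw [hT'def]
      nlinarith [div_nonneg hK0 (le_of_lt hr)]
    have hmono : (∫ _u in T₀..T', r) ≤ ∫ u in T₀..T', v u ^ 2 := by
      apply intervalIntegral.integral_mono_on hT'ge intervalIntegrable_const
        (hvint T₀ T' hT₀ hT'ge)
      intro u hu
      exact hno u hu.1
    rw [intervalIntegral.integral_const, smul_eq_mul] at hmono
    have hup := hSbound T₀ T' hT₀ hT'ge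
    have hTT : T' - T₀ = K/r + 1 := by rw [hT'def]; ring
    rw [hTT] at hmono
    have : (K/r + 1) * r = K + r := by field_simp
    nlinarith
  -- exponential integral formula
  have hexp_int : ∀ t T : ℝ, t ≤ T →
      ∫ s in t..T, Real.exp (-(2*ε*s))
        = (Real.exp (-(2*ε*t)) - Real.exp (-(2*ε*T)))/(2*ε) := by
    intro t T htT
    have hF : ∀ s : ℝ, HasDerivAt (fun u => -Real.exp (-(2*ε*u))/(2*ε))
        (Real.exp (-(2*ε*s))) s := by
      intro s
      have h1 : HasDerivAt (fun u : ℝ => -(2*ε*u)) (-(2*ε)) s := by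
        simpa using ((hasDerivAt_id s).const_mul (-(2*ε)))
      have h2 : HasDerivAt (fun u => -Real.exp (-(2*ε*u))/(2*ε)) _ s := (h1.exp).neg.div_const (2*ε)
      convert h2 using 1
      field_simp
    rw [intervalIntegral.integral_eq_sub_of_hasDerivAt
      (fun s _ => hF s)
      ((by fun_prop : Continuous fun s : ℝ => Real.exp (-(2*ε*s))).intervalIntegrable _ _)]
    ring
  set E : ℝ → ℝ := fun s => Real.exp (-(ε*s)) with hEdef
  have hEpos : ∀ s, 0 < E s := fun s => Real.exp_pos _
  have hEc : Continuous E := by fun_prop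
  have hE' : ∀ s : ℝ, HasDerivAt E (-ε * E s) s := by
    intro s
    have h1 : HasDerivAt (fun u : ℝ => -(ε*u)) (-ε) s := by
      simpa using ((hasDerivAt_id s).const_mul (-ε))
    have h2 := h1.exp
    convert h2 using 1
    show -ε * Real.exp (-(ε*s)) = _
    ring
  set u : ℝ → ℝ := fun s => y s * E s with hudef
  have hu' : ∀ s ∈ Ici (0:ℝ), HasDerivAt u (ε * v s * E s) s := by
    intro s hs
    have h2 : HasDerivAt (fun s => y s * E s) _ s := (hy s hs).mul (hE' s)
    convert h2 using 1
    show ε * (x s - y s) * E s = _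
    ring
  have hvEint : ∀ t T : ℝ, 0 ≤ t → t ≤ T →
      IntervalIntegrable (fun s => v s * E s) MeasureTheory.volume t T := by
    intro t T ht htT
    apply ContinuousOn.intervalIntegrable
    rw [uIcc_of_le htT]
    intro s hs
    exact ((hvc s (le_trans ht hs.1)).mul hEc.continuousAt).continuousWithinAt
  have huFTC : ∀ t T : ℝ, 0 ≤ t → t ≤ T →
      u T - u t = ε * ∫ s in t..T, v s * E s := by
    intro t T ht htT
    have h1 : ∫ s in t..T, ε * (v s * E s) = u T - u t := by
      apply intervalIntegral.integral_eq_sub_of_hasDerivAt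
      · intro s hs
        rw [uIcc_of_le htT] at hs
        have := hu' s (le_trans ht hs.1)
        convert this using 1
        all_goals first | rfl | ring
      · exact (hvEint t T ht htT).const_mul ε
    rw [← h1, intervalIntegral.integral_const_mul]
  set β : ℝ := ε/2 + 1/4 with hbetadef
  have hβpos : 0 < β := by rw [hbetadef]; positivity
  set C : ℝ := 1 + Real.sqrt M with hCdef
  have hCpos : 0 < C := by
    rw [hCdef]; positivity
  have hyC : ∀ t, 0 ≤ t → |y t| ≤ C := by
    intro t ht
    have h1 : 0 < 1 - x t ^ 2 := hzpos t ht
    have h2 : |x t| ≤ 1 := by nlinarith [sq_abs (x t), abs_nonneg (x t)]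
    have h3 : |v t| ≤ Real.sqrt M := by
      rw [← Real.sqrt_sq_eq_abs]
      exact Real.sqrt_le_sqrt (hv2M t ht)
    have h4 : y t = x t - v t := by show y t = x t - (x t - y t); ring
    have h5 := abs_le.mp h2
    have h6 := abs_le.mp h3
    apply abs_le.mpr
    rw [hCdef]
    constructor
    · rw [h4]; linarith [h5.1, h5.2, h6.1, h6.2]
    · rw [h4]; linarith [h5.1, h5.2, h6.1, h6.2]
  -- main estimate on |y t|
  have hy_est : ∀ t T θ : ℝ, 0 ≤ t → t ≤ T → 0 < θ →
      (∫ s in t..T, v s ^ 2) ≤ θ →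
      |y t| ≤ C * Real.exp (ε*t - ε*T) + β * Real.sqrt (θ + E t) := by
    intro t T θ ht htT hθ hint
    set σ : ℝ := Real.sqrt (θ + E t) with hsigmadef
    have hσpos : 0 < σ := Real.sqrt_pos.mpr (by positivity)
    have hσsq : σ^2 = θ + E t := Real.sq_sqrt (by positivity)
    set lam : ℝ := E t / σ with hlamdef
    have hlampos : 0 < lam := div_pos (hEpos t) hσpos
    set mu : ℝ := σ / E t with hmudef
    have hmupos : 0 < mu := div_pos hσpos (hEpos t)
    have hlammu : lam * mu = 1 := by
      rw [hlamdef, hmudef]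
      have hEt := (hEpos t).ne'
      field_simp
    set P : ℝ := ∫ s in t..T, v s * E s with hPdef
    have hq2 : ∀ s : ℝ, Real.exp (-(2*ε*s)) = E s ^ 2 := by
      intro s
      show _ = Real.exp (-(ε*s)) ^ 2
      rw [sq, ← Real.exp_add]
      ring_nf
    have hpt : ∀ s, |v s * E s| ≤ (lam * v s ^ 2 + mu * Real.exp (-(2*ε*s)))/2 := by
      intro s
      have h1 : |v s * E s| = |v s| * E s := by
        rw [abs_mul, abs_of_pos (hEpos s)]
      rw [h1, hq2 s, hlamdef, hmudef, ← sq_abs (v s)]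
      generalize |v s| = w
      have heq2 : (E t/σ) * w^2 + (σ/E t) * E s^2 - 2*(w * E s)
          = (E t * w - σ * E s)^2/(σ * E t) := by
        have hEt := (hEpos t).ne'
        field_simp
        ring
      nlinarith [heq2, div_nonneg (sq_nonneg (E t * w - σ * E s))
        (by positivity : (0:ℝ) ≤ σ * E t)]
    have int_abs : IntervalIntegrable (fun s => |v s * E s|) MeasureTheory.volume t T := by
      apply ContinuousOn.intervalIntegrable
      rw [uIcc_of_le htT]
      intro s hs
      exact (((hvc s (le_trans ht hs.1)).mul hEc.continuousAt).abs).continuousWithinAt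
    have int_rhs : IntervalIntegrable
        (fun s => (lam * v s ^ 2 + mu * Real.exp (-(2*ε*s)))/2) MeasureTheory.volume t T := by
      apply ContinuousOn.intervalIntegrable
      rw [uIcc_of_le htT]
      intro s hs
      have : ContinuousAt (fun s => (lam * v s ^ 2 + mu * Real.exp (-(2*ε*s)))/2) s := by
        have h1 : ContinuousAt (fun s : ℝ => Real.exp (-(2*ε*s))) s := by fun_prop
        exact ((continuousAt_const.mul ((hvc s (le_trans ht hs.1)).pow 2)).add
          (continuousAt_const.mul h1)).div_const 2
      exact this.continuousWithinAt
    have hP1 : |P| ≤ ∫ s in t..T, |v s * E s| := by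
      rw [hPdef]
      exact intervalIntegral.abs_integral_le_integral_abs htT
    have hP2 : (∫ s in t..T, |v s * E s|)
        ≤ ∫ s in t..T, (lam * v s ^ 2 + mu * Real.exp (-(2*ε*s)))/2 :=
      intervalIntegral.integral_mono_on htT int_abs int_rhs (fun s _ => hpt s)
    have hP3 : (∫ s in t..T, (lam * v s ^ 2 + mu * Real.exp (-(2*ε*s)))/2)
        = (lam/2) * (∫ s in t..T, v s ^ 2)
          + (mu/2) * ∫ s in t..T, Real.exp (-(2*ε*s)) := by
      have hfeq : (fun s => (lam * v s ^ 2 + mu * Real.exp (-(2*ε*s)))/2)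
          = fun s => (lam/2) * v s ^ 2 + (mu/2) * Real.exp (-(2*ε*s)) := by
        funext s; ring
      rw [hfeq, intervalIntegral.integral_add
        ((hvint t T ht htT).const_mul (lam/2))
        (((by fun_prop : Continuous fun s : ℝ => Real.exp (-(2*ε*s))).intervalIntegrable
          _ _).const_mul (mu/2)),
        intervalIntegral.integral_const_mul, intervalIntegral.integral_const_mul]
    have hPbound : |P| ≤ (lam/2) * θ + (mu/2) * (E t ^ 2/(2*ε)) := by
      have h4 := hexp_int t T htT
      have h5 : (∫ s in t..T, Real.exp (-(2*ε*s))) ≤ E t ^ 2/(2*ε) := by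
        rw [h4, hq2 t]
        have h2e : (0:ℝ) < 2*ε := by positivity
        rw [div_le_div_iff₀ h2e h2e]
        nlinarith [Real.exp_pos (-(2*ε*T))]
      calc |P| ≤ _ := hP1.trans hP2
        _ = _ := hP3
        _ ≤ _ := by
            have h6 : (lam/2) * (∫ s in t..T, v s ^ 2) ≤ (lam/2) * θ :=
              mul_le_mul_of_nonneg_left hint (by positivity)
            have h7 : (mu/2) * (∫ s in t..T, Real.exp (-(2*ε*s))) ≤ (mu/2) * (E t ^2/(2*ε)) :=
              mul_le_mul_of_nonneg_left h5 (by positivity)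
            linarith
    -- from FTC: u t = u T - ε P
    have h8 : u t = u T - ε * P := by
      have := huFTC t T ht htT
      rw [← hPdef] at this
      linarith
    have h9 : |u t| ≤ C * E T + ε * ((lam/2) * θ + (mu/2) * (E t ^ 2/(2*ε))) := by
      rw [h8, sub_eq_add_neg]
      calc |u T + -(ε * P)| ≤ |u T| + |-(ε * P)| := abs_add_le _ _
        _ = |u T| + ε * |P| := by rw [abs_neg, abs_mul ε P, abs_of_pos hε]
        _ ≤ C * E T + ε * ((lam/2) * θ + (mu/2) * (E t ^ 2/(2*ε))) := by
            have h10 : |u T| = |y T| * E T := by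
              rw [hudef]; rw [abs_mul, abs_of_pos (hEpos T)]
            have h11 : |y T| * E T ≤ C * E T :=
              mul_le_mul_of_nonneg_right (hyC T (le_trans ht htT)) (hEpos T).le
            have h12 := mul_le_mul_of_nonneg_left hPbound hε.le
            rw [h10]
            exact add_le_add h11 h12
    -- unfold and conclude
    have h13 : |u t| = |y t| * E t := by
      rw [hudef]; rw [abs_mul, abs_of_pos (hEpos t)]
    rw [h13] at h9
    have hET : E T = Real.exp (ε*t - ε*T) * E t := by
      show Real.exp (-(ε*T)) = _ * Real.exp (-(ε*t))
      rw [← Real.exp_add]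
      ring_nf
    have e1 : lam * θ ≤ E t * σ := by
      rw [hlamdef, div_mul_eq_mul_div, div_le_iff₀ hσpos]
      nlinarith [hEpos t]
    have e2 : mu * E t ^ 2 = σ * E t := by
      rw [hmudef]
      field_simp
    have e3 : ε * ((mu/2) * (E t ^2/(2*ε))) = mu * E t ^2/4 := by
      field_simp; ring
    have hfin : |y t| * E t ≤ (C * Real.exp (ε*t - ε*T) + β * σ) * E t := by
      rw [hET] at h9
      have h14 : ε * ((lam/2) * θ) ≤ ε * (E t * σ)/2 := by nlinarith
      rw [hbetadef]
      nlinarith [h9, e2, e3, h14]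
    exact le_of_mul_le_mul_right hfin (hEpos t)
  -- choose smallness threshold r and derive the contradiction
  set Eps : ℝ := Real.exp (-(W 0/(2*ε))) with hEpsdef
  have hEpspos : 0 < Eps := Real.exp_pos _
  have hEps1 : Eps < 1 := by
    rw [hEpsdef]
    apply Real.exp_lt_one_iff.mpr
    have h1 : 0 < W 0/(2*ε) := div_pos hc (by positivity)
    linarith
  set r : ℝ := min (W 0/4) ((1 - Eps)/8) with hrdef
  have hrpos : 0 < r :=
    lt_min (div_pos hc (by norm_num)) (div_pos (by linarith) (by norm_num))
  have hr1 : r ≤ W 0/4 := min_le_left _ _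
  have hr2 : r ≤ (1 - Eps)/8 := min_le_right _ _
  set th : ℝ := r/(8*β^2) with hthdef
  have hthpos : 0 < th := by rw [hthdef]; positivity
  obtain ⟨T₁, hT₁0, hT₁⟩ := htail th hthpos
  set T₂ : ℝ := max T₁ (max 0 ((-Real.log th)/ε)) with hT2def
  have hT₂0 : 0 ≤ T₂ := le_trans (le_max_left _ _) (le_max_right T₁ _)
  obtain ⟨t, htt, hvt⟩ := hsmallv r hrpos T₂ hT₂0
  have ht0 : 0 ≤ t := le_trans hT₂0 htt
  set Lg : ℝ := Real.log (2*C/Real.sqrt r) with hLgdef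
  set T : ℝ := t + (max 0 Lg)/ε with hTdef
  have htT : t ≤ T := by
    rw [hTdef]
    have h1 : 0 ≤ max 0 Lg := le_max_left _ _
    have := div_nonneg h1 hε.le
    linarith
  have htail_t : (∫ s in t..T, v s ^ 2) ≤ th :=
    hT₁ t T (le_trans (le_max_left _ _) htt) htT
  have hyt := hy_est t T th ht0 htT hthpos htail_t
  have hsrpos : 0 < Real.sqrt r := Real.sqrt_pos.mpr hrpos
  have hterm1 : C * Real.exp (ε*t - ε*T) ≤ Real.sqrt r/2 := by
    have hexpT : ε*t - ε*T = -(max 0 Lg) := by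
      rw [hTdef]
      field_simp
      ring
    rw [hexpT]
    rcases le_or_gt Lg 0 with hL | hL
    · rw [max_eq_left hL, neg_zero, Real.exp_zero, mul_one]
      have h2 : 2*C/Real.sqrt r ≤ 1 := by
        have := (Real.log_nonpos_iff (by positivity : 0 ≤ 2*C/Real.sqrt r)).mp hL
        exact this
      rw [div_le_one hsrpos] at h2
      linarith
    · rw [max_eq_right hL.le]
      have h3 : Real.exp (-Lg) = Real.sqrt r/(2*C) := by
        rw [Real.exp_neg, hLgdef, Real.exp_log (by positivity), inv_div]
      rw [h3]
      apply le_of_eq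
      field_simp
  have hterm2 : β * Real.sqrt (th + E t) ≤ Real.sqrt r/2 := by
    have hEt : E t ≤ th := by
      show Real.exp (-(ε*t)) ≤ th
      rw [← Real.exp_log hthpos]
      apply Real.exp_le_exp.mpr
      have h1 : (-Real.log th)/ε ≤ t :=
        le_trans (le_trans (le_max_right 0 _) (le_max_right T₁ _)) htt
      rw [div_le_iff₀ hε] at h1
      nlinarith
    have h2 : th + E t ≤ r/(4*β^2) := by
      have h4 : 2*th = r/(4*β^2) := by
        rw [hthdef]; field_simp; ring
      linarith
    have h5 : Real.sqrt (th + E t) ≤ Real.sqrt (r/(4*β^2)) := Real.sqrt_le_sqrt h2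
    have h6 : Real.sqrt (r/(4*β^2)) = Real.sqrt r/(2*β) := by
      rw [show r/(4*β^2) = (Real.sqrt r/(2*β))^2 by
        rw [div_pow, Real.sq_sqrt hrpos.le]; ring]
      exact Real.sqrt_sq (by positivity)
    calc β * Real.sqrt (th + E t) ≤ β * (Real.sqrt r/(2*β)) :=
          mul_le_mul_of_nonneg_left (h6 ▸ h5) hβpos.le
      _ = Real.sqrt r/2 := by field_simp
  have hy2 : |y t| ≤ Real.sqrt r := by
    have h7 := add_le_add hterm1 hterm2
    calc |y t| ≤ _ := hyt
      _ ≤ Real.sqrt r/2 + Real.sqrt r/2 := h7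
      _ = Real.sqrt r := by ring
  have hysq : y t ^ 2 ≤ r := by
    have h8 : |y t|^2 ≤ Real.sqrt r^2 := pow_le_pow_left₀ (abs_nonneg _) hy2 2
    rw [sq_abs, Real.sq_sqrt hrpos.le] at h8
    exact h8
  have hxsq : x t ^ 2 ≤ 4*r := by
    have hxe : x t = v t + y t := by show x t = (x t - y t) + y t; ring
    rw [hxe]
    clear_value r
    nlinarith [sq_nonneg (v t - y t), hvt, hysq]
  have hzr : Eps ≤ z t := by
    show Eps ≤ 1 - x t ^ 2
    clear_value r Eps
    linarith [hxsq, hr2, hEps1.le]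
  have hlogz : -(W 0/(2*ε)) ≤ Real.log (z t) := by
    calc -(W 0/(2*ε)) = Real.log Eps := by rw [hEpsdef, Real.log_exp]
      _ ≤ Real.log (z t) := Real.log_le_log hEpspos hzr
  have hW0t := hWmono 0 t le_rfl ht0
  have hWt : W t = v t ^ 2 - ε * Real.log (z t) := rfl
  rw [hWt] at hW0t
  have hmul : ε * (-(W 0/(2*ε))) = -(W 0/2) := by field_simp
  have hmul2 : ε * (-(W 0/(2*ε))) ≤ ε * Real.log (z t) :=
    mul_le_mul_of_nonneg_left hlogz hε.le
  rw [hmul] at hmul2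
  clear_value r Eps W
  linarith [hW0t, hvt, hr1, hc, hmul2]
end

section
/- Let ε > 0 and let (x, y) : [0, ∞) → ℝ² be a differentiable solution of x'(t) = (1 − x(t)²)(x(t) − y(t)), y'(t) = ε·x(t) with x(0) > 1 and y(0) ≥ x(0). Then for all t ≥ 0 one has x(t) > 1 and y(t) ≥ x(t); i.e., the region {(x, y) : x > 1, y ≥ x} is positively invariant. -/
open Real Set Filter Topology

/-- The region `{(x, y) : x > 1, y ≥ x}` is positively invariant for the
slow-fast system `ẋ = (1 - x²)(x - y), ẏ = ε x`. -/
theorem region_positively_invariant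
    (ε : ℝ) (hε : 0 < ε) (x y : ℝ → ℝ)
    (hx : ∀ t ∈ Set.Ici (0 : ℝ), HasDerivAt x ((1 - x t ^ 2) * (x t - y t)) t)
    (hy : ∀ t ∈ Set.Ici (0 : ℝ), HasDerivAt y (ε * x t) t)
    (hx0 : 1 < x 0) (hyx0 : x 0 ≤ y 0) :
    ∀ t ∈ Set.Ici (0 : ℝ), 1 < x t ∧ x t ≤ y t := by
  by_contra hcon
  push_neg at hcon
  obtain ⟨t₀, ht₀, hbad⟩ := hcon
  set S : Set ℝ := {t | 0 ≤ t ∧ ¬ (1 < x t ∧ x t ≤ y t)} with hSdef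
  have hne : S.Nonempty := ⟨t₀, ht₀, fun h1 => absurd h1.2 (not_le.mpr (hbad h1.1))⟩
  have hbdd : BddBelow S := ⟨0, fun s hs => hs.1⟩
  set T := sInf S with hTdef
  have hT0 : 0 ≤ T := le_csInf hne fun s hs => hs.1
  have hcx : ContinuousAt x T := (hx T hT0).continuousAt
  have hcy : ContinuousAt y T := (hy T hT0).continuousAt
  -- everything before `T` is good
  have hgood : ∀ s, 0 ≤ s → s < T → 1 < x s ∧ x s ≤ y s := by
    intro s hs0 hsT
    by_contra h
    exact absurd (csInf_le hbdd ⟨hs0, h⟩) (not_le.mpr hsT)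
  -- x is monotone on [0, T]
  have hmono : MonotoneOn x (Set.Icc 0 T) := by
    apply monotoneOn_of_deriv_nonneg (convex_Icc 0 T)
    · intro s hs
      exact ((hx s (Set.mem_Ici.mpr hs.1)).continuousAt).continuousWithinAt
    · intro s hs
      rw [interior_Icc] at hs
      exact ((hx s (le_of_lt hs.1)).differentiableAt).differentiableWithinAt
    · intro s hs
      rw [interior_Icc] at hs
      rw [(hx s (le_of_lt hs.1)).deriv]
      obtain ⟨h1, h2⟩ := hgood s (le_of_lt hs.1) hs.2
      have : 1 - x s ^ 2 ≤ 0 := by nlinarith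
      have : x s - y s ≤ 0 := by linarith
      nlinarith
  -- `T` itself is good
  have hgT : 1 < x T ∧ x T ≤ y T := by
    rcases eq_or_lt_of_le hT0 with h | h
    · rw [← h]; exact ⟨hx0, hyx0⟩
    · constructor
      · have := hmono (Set.mem_Icc.mpr ⟨le_refl 0, hT0⟩) (Set.mem_Icc.mpr ⟨hT0, le_refl T⟩)
          hT0
        linarith
      · -- limit from the left
        have hne' : (𝓝[Set.Ioo 0 T] T).NeBot := by
          apply mem_closure_iff_nhdsWithin_neBot.mp
          rw [closure_Ioo (ne_of_lt h)]
          exact Set.mem_Icc.mpr ⟨hT0, le_refl T⟩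
        have htend : Filter.Tendsto (fun s => y s - x s) (𝓝[Set.Ioo 0 T] T)
            (𝓝 (y T - x T)) :=
          ((hcy.sub hcx).continuousWithinAt)
        have hev : ∀ᶠ s in 𝓝[Set.Ioo 0 T] T, 0 ≤ y s - x s := by
          filter_upwards [self_mem_nhdsWithin] with s hs
          have := hgood s (le_of_lt hs.1) hs.2
          linarith [this.2]
        have := ge_of_tendsto htend hev
        linarith
  have hTnS : T ∉ S := fun h => h.2 hgT
  -- good eventually to the right of `T`
  have hevx : ∀ᶠ t in 𝓝[>] T, 1 < x t :=
    eventually_nhdsWithin_of_eventually_nhds (hcx.eventually (eventually_gt_nhds hgT.1))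
  have hevg : ∀ᶠ t in 𝓝[>] T, x t ≤ y t := by
    rcases eq_or_lt_of_le hgT.2 with heq | hlt
    · -- y T = x T : use the derivative of y - x at T
      have hg : HasDerivAt (fun t => y t - x t)
          (ε * x T - (1 - x T ^ 2) * (x T - y T)) T := (hy T hT0).sub (hx T hT0)
      have hd : ε * x T - (1 - x T ^ 2) * (x T - y T) = ε * x T := by
        rw [← heq]; ring
      rw [hd] at hg
      have hdpos : 0 < ε * x T := by nlinarith [hgT.1]
      have hslope := hasDerivAt_iff_tendsto_slope.mp hg
      have hev : ∀ᶠ t in 𝓝[≠] T, 0 < slope (fun t => y t - x t) T t :=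
        hslope.eventually (eventually_gt_nhds hdpos)
      have hev' : ∀ᶠ t in 𝓝[>] T, 0 < slope (fun t => y t - x t) T t :=
        hev.filter_mono (nhdsWithin_mono T fun t ht => ne_of_gt ht)
      filter_upwards [hev', self_mem_nhdsWithin] with t ht htT
      have hTt : (0:ℝ) < t - T := sub_pos.mpr htT
      rw [slope_def_field] at ht
      have : 0 < (y t - x t - (y T - x T)) / (t - T) := by
        simpa [div_eq_iff (ne_of_gt hTt)] using ht
      have h2 : 0 < y t - x t - (y T - x T) :=
        ((div_pos_iff.mp this).resolve_right (fun h => absurd hTt (not_lt.mpr h.2.le))).1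
      linarith
    · apply eventually_nhdsWithin_of_eventually_nhds
      have hc : ContinuousAt (fun t => y t - x t) T := hcy.sub hcx
      have := hc.eventually_mem (isOpen_Ioi.mem_nhds (show y T - x T ∈ Set.Ioi 0 by
        simp only [Set.mem_Ioi]; linarith))
      filter_upwards [this] with t ht
      simp only [Set.mem_Ioi] at ht
      linarith
  -- get an interval of good points to the right of T, contradiction with sInf
  obtain ⟨u, hu, hgoodu⟩ := (hevx.and hevg).exists_mem
  rw [mem_nhdsGT_iff_exists_Ioo_subset] at hu
  obtain ⟨b, hb, hsub⟩ := hu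
  obtain ⟨s, hsS, hsb⟩ := (csInf_lt_iff hbdd hne).mp (show sInf S < b from hb)
  have hTs : T ≤ s := csInf_le hbdd hsS
  have hTs' : T < s := lt_of_le_of_ne hTs (fun h => hTnS (h ▸ hsS))
  exact hsS.2 (hgoodu s (hsub ⟨hTs', hsb⟩))
end

section
/- Let ε > 0 and let (x, y) : [0, ∞) → ℝ² be a global differentiable solution of x'(t) = (1 − x(t)²)(x(t) − y(t)), y'(t) = ε·x(t) with |x(0)| > 1. Then the orbit is asymptotic to the line y = x: lim_{t → ∞} (y(t) − x(t)) = 0. -/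
open Real Set Filter Topology

lemma monoOn_aux {φ φ' : ℝ → ℝ} {a b : ℝ}
    (hd : ∀ t ∈ Icc a b, HasDerivAt φ (φ' t) t)
    (h0 : ∀ t ∈ Ioo a b, 0 ≤ φ' t) : MonotoneOn φ (Icc a b) := by
  apply monotoneOn_of_deriv_nonneg (convex_Icc a b)
  · exact fun t ht => (hd t ht).continuousAt.continuousWithinAt
  · rw [interior_Icc]
    exact fun t ht => (hd t (Ioo_subset_Icc_self ht)).differentiableAt.differentiableWithinAt
  · rw [interior_Icc]
    intro t ht
    rw [(hd t (Ioo_subset_Icc_self ht)).deriv]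
    exact h0 t ht

lemma growth_aux {φ φ' : ℝ → ℝ} {a b c : ℝ} (hab : a ≤ b)
    (hd : ∀ t ∈ Icc a b, HasDerivAt φ (φ' t) t)
    (hc : ∀ t ∈ Ioo a b, c ≤ φ' t) : φ a + c * (b - a) ≤ φ b := by
  have h1 : ∀ t ∈ Icc a b, HasDerivAt (fun s => φ s - c * s) (φ' t - c) t := by
    intro t ht
    have h := (hd t ht).sub ((hasDerivAt_id t).const_mul c)
    simp only [id, mul_one] at h
    exact h
  have h2 : MonotoneOn (fun s => φ s - c * s) (Icc a b) :=
    monoOn_aux h1 (fun t ht => by have := hc t ht; simp; linarith)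
  have := h2 (left_mem_Icc.2 hab) (right_mem_Icc.2 hab) hab
  simp only at this
  linarith

lemma decay_aux {φ φ' : ℝ → ℝ} {a b c : ℝ} (hab : a ≤ b)
    (hd : ∀ t ∈ Icc a b, HasDerivAt φ (φ' t) t)
    (hc : ∀ t ∈ Ioo a b, φ' t ≤ c) : φ b ≤ φ a + c * (b - a) := by
  have := growth_aux (φ := fun s => -(φ s)) (φ' := fun s => -(φ' s)) (c := -c) hab
    (fun t ht => (hd t ht).neg) (fun t ht => by have := hc t ht; simp; linarith)
  try simp only at this
  linarith

lemma main_pos (ε : ℝ) (hε : 0 < ε) (x y : ℝ → ℝ)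
    (hx : ∀ t ∈ Set.Ici (0 : ℝ), HasDerivAt x ((1 - x t ^ 2) * (x t - y t)) t)
    (hy : ∀ t ∈ Set.Ici (0 : ℝ), HasDerivAt y (ε * x t) t)
    (h1 : 1 < x 0) :
    Tendsto (fun t => y t - x t) atTop (𝓝 0) := by
  -- notation
  set u : ℝ → ℝ := fun t => y t - x t with hu_def
  set u' : ℝ → ℝ := fun t => ε * x t - (x t ^ 2 - 1) * (y t - x t) with hu'_def
  have hu : ∀ t ∈ Set.Ici (0:ℝ), HasDerivAt u (u' t) t := by
    intro t ht
    have := (hy t ht).sub (hx t ht)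
    refine this.congr_deriv ?_
    simp only [hu'_def]
    ring
  -- Step 1 : x stays above 1
  have hx1 : ∀ t, 0 ≤ t → 1 < x t := by
    by_contra hcon
    push_neg at hcon
    obtain ⟨t₀, ht₀, hxt₀⟩ := hcon
    have hxc : ContinuousOn x (Icc 0 t₀) := fun t ht =>
      (hx t ht.1).continuousAt.continuousWithinAt
    have hmem : (1:ℝ) ∈ Icc (x t₀) (x 0) := ⟨hxt₀, h1.le⟩
    obtain ⟨s, hs, hxs⟩ := intermediate_value_Icc' ht₀ hxc hmem
    -- bound for the coefficient on [0,s]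
    have hsub : Icc (0:ℝ) s ⊆ Icc 0 t₀ := Icc_subset_Icc le_rfl hs.2
    have hgc : ContinuousOn (fun t => (1 + x t) * (x t - y t)) (Icc 0 s) := by
      intro t ht
      have ht' : t ∈ Set.Ici (0:ℝ) := ht.1
      have hx' : ContinuousAt x t := (hx t ht').continuousAt
      have hy' : ContinuousAt y t := (hy t ht').continuousAt
      exact ((continuousAt_const.add hx').mul (hx'.sub hy')).continuousWithinAt
    obtain ⟨C, hC⟩ := isCompact_Icc.exists_bound_of_continuousOn hgc
    -- monotone auxiliary function
    set m : ℝ → ℝ := fun t => (x t - 1) ^ 2 * Real.exp (2 * C * t) with hm_def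
    set D : ℝ → ℝ := fun t =>
      2 * (x t - 1) * ((1 - x t ^ 2) * (x t - y t)) * Real.exp (2 * C * t)
        + (x t - 1) ^ 2 * (Real.exp (2 * C * t) * (2 * C)) with hD_def
    have hmd : ∀ t ∈ Icc 0 s, HasDerivAt m (D t) t := by
      intro t ht
      have ht' : t ∈ Set.Ici (0:ℝ) := ht.1
      have h1' : HasDerivAt (fun t => (x t - 1) ^ 2)
          (2 * (x t - 1) * ((1 - x t ^ 2) * (x t - y t))) t := by
        have := ((hx t ht').sub_const 1).pow 2
        refine this.congr_deriv ?_
        push_cast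
        ring
      have h2' : HasDerivAt (fun t => Real.exp (2 * C * t))
          (Real.exp (2 * C * t) * (2 * C)) t := by
        have h0 : HasDerivAt (fun t : ℝ => 2 * C * t) (2 * C) t := by
          simpa using (hasDerivAt_id t).const_mul (2 * C)
        exact h0.exp
      exact h1'.mul h2'
    have hDpos : ∀ t ∈ Ioo 0 s, 0 ≤ D t := by
      intro t ht
      have ht' := Ioo_subset_Icc_self ht
      have hb : (1 + x t) * (x t - y t) ≤ C := by
        have := hC t ht'
        rw [Real.norm_eq_abs] at this
        exact (le_abs_self _).trans this
      have heq : D t = 2 * (x t - 1) ^ 2 * (C - (1 + x t) * (x t - y t))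
          * Real.exp (2 * C * t) := by
        simp only [hD_def]
        ring
      rw [heq]
      exact mul_nonneg (mul_nonneg (by positivity) (by linarith)) (Real.exp_pos _).le
    have hmono := monoOn_aux hmd hDpos
    have hle := hmono (left_mem_Icc.2 hs.1) (right_mem_Icc.2 hs.1) hs.1
    have hm0 : m 0 = (x 0 - 1) ^ 2 := by simp [hm_def]
    have hms : m s = 0 := by simp [hm_def, hxs]
    rw [hm0, hms] at hle
    nlinarith
  -- Step 2 : find T₁ with u T₁ > 0, and positivity afterwards
  have hugrow : ∀ a b : ℝ, 0 ≤ a → a ≤ b → (∀ t ∈ Icc a b, u t ≤ 0) →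
      u a + ε * (b - a) ≤ u b := by
    intro a b ha hab hneg
    apply growth_aux hab (fun t ht => hu t (le_trans ha ht.1))
    intro t ht
    have ht0 : (0:ℝ) ≤ t := le_trans ha ht.1.le
    have hx1' := hx1 t ht0
    have hun : y t - x t ≤ 0 := hneg t (Ioo_subset_Icc_self ht)
    simp only [hu'_def]
    have h2 : 0 ≤ (x t ^ 2 - 1) * (-(y t - x t)) :=
      mul_nonneg (by nlinarith) (by linarith)
    nlinarith
  obtain ⟨T₁, hT₁0, hT₁u⟩ : ∃ T, 0 ≤ T ∧ 0 < u T := by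
    by_contra hcon
    push_neg at hcon
    set b := (1 - u 0) / ε with hb_def
    have hb0 : 0 ≤ b := by
      have h0 : y 0 - x 0 ≤ 0 := hcon 0 le_rfl
      apply div_nonneg _ hε.le
      simp only [hu_def]
      linarith
    have := hugrow 0 b le_rfl hb0 (fun t ht => hcon t ht.1)
    have hb' : ε * b = 1 - u 0 := by
      rw [hb_def]
      field_simp
    have := hcon b hb0
    nlinarith
  -- positivity of u after T₁
  have hupos : ∀ t, T₁ ≤ t → 0 < u t := by
    intro t₂ ht₂
    by_contra hcon
    push_neg at hcon
    -- set of times in [T₁,t₂] where u ≤ 0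
    set S := Icc T₁ t₂ ∩ u ⁻¹' Iic 0 with hS_def
    have hT₁Ici : Icc T₁ t₂ ⊆ Set.Ici (0:ℝ) := fun r hr => le_trans hT₁0 hr.1
    have hucont : ContinuousOn u (Icc T₁ t₂) := fun r hr =>
      (hu r (hT₁Ici hr)).continuousAt.continuousWithinAt
    have hScl : IsClosed S := hucont.preimage_isClosed_of_isClosed isClosed_Icc isClosed_Iic
    have hSne : S.Nonempty := ⟨t₂, ⟨⟨ht₂, le_rfl⟩, hcon⟩⟩
    have hSbdd : BddBelow S := ⟨T₁, fun r hr => hr.1.1⟩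
    set s := sInf S with hs_def
    have hsS : s ∈ S := hScl.csInf_mem hSne hSbdd
    have hspos : ∀ r, T₁ ≤ r → r < s → 0 < u r := by
      intro r hr hrs
      by_contra hru
      push_neg at hru
      have : r ∈ S := ⟨⟨hr, le_trans hrs.le hsS.1.2⟩, hru⟩
      exact absurd (csInf_le hSbdd this) (not_le.2 hrs)
    -- bound the coefficient on [T₁, s]
    have hgc : ContinuousOn (fun t => x t ^ 2 - 1) (Icc T₁ s) := by
      intro r hr
      have hr' : r ∈ Set.Ici (0:ℝ) := le_trans hT₁0 hr.1
      exact (((hx r hr').continuousAt.pow 2).sub continuousAt_const).continuousWithinAt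
    obtain ⟨C, hC⟩ := isCompact_Icc.exists_bound_of_continuousOn hgc
    set φ : ℝ → ℝ := fun t => u t * Real.exp (C * t) with hφ_def
    set D : ℝ → ℝ := fun t => u' t * Real.exp (C * t) + u t * (Real.exp (C * t) * C)
      with hD_def
    have hsub : Icc T₁ s ⊆ Set.Ici (0:ℝ) := fun r hr => le_trans hT₁0 hr.1
    have hφd : ∀ t ∈ Icc T₁ s, HasDerivAt φ (D t) t := by
      intro t ht
      have h2' : HasDerivAt (fun t => Real.exp (C * t)) (Real.exp (C * t) * C) t := by
        have h0 : HasDerivAt (fun t : ℝ => C * t) C t := by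
          simpa using (hasDerivAt_id t).const_mul C
        exact h0.exp
      exact (hu t (hsub ht)).mul h2'
    have hDpos : ∀ t ∈ Ioo T₁ s, 0 ≤ D t := by
      intro t ht
      have ht' := Ioo_subset_Icc_self ht
      have hb : x t ^ 2 - 1 ≤ C := by
        have := hC t ht'
        rw [Real.norm_eq_abs] at this
        exact (le_abs_self _).trans this
      have hut : 0 < u t := hspos t ht.1.le ht.2
      have hxt := hx1 t (le_trans hT₁0 ht.1.le)
      have hexp := Real.exp_pos (C * t)
      have heq : D t = (ε * x t + (C - (x t ^ 2 - 1)) * u t) * Real.exp (C * t) := by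
        simp only [hD_def, hu'_def]
        ring
      rw [heq]
      have h6 : 0 < ε * x t := mul_pos hε (by linarith)
      have h5 : 0 ≤ (C - (x t ^ 2 - 1)) * u t := mul_nonneg (by linarith) hut.le
      exact mul_nonneg (by linarith) hexp.le
    have hsT₁ : T₁ ≤ s := hsS.1.1
    have hle := monoOn_aux hφd hDpos (left_mem_Icc.2 hsT₁) (right_mem_Icc.2 hsT₁) hsT₁
    have hus : u s ≤ 0 := hsS.2
    have he1 := Real.exp_pos (C * T₁)
    have he2 := Real.exp_pos (C * s)
    have hle' : u T₁ * Real.exp (C * T₁) ≤ u s * Real.exp (C * s) := hle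
    have h7 : 0 < u T₁ * Real.exp (C * T₁) := mul_pos hT₁u he1
    have h8 : u s * Real.exp (C * s) ≤ 0 := mul_nonpos_of_nonpos_of_nonneg hus he2.le
    linarith
  -- Step 3 : x is monotone on [T₁, ∞)
  have hxmono : ∀ a b : ℝ, T₁ ≤ a → a ≤ b → x a ≤ x b := by
    intro a b ha hab
    have hd : ∀ t ∈ Icc a b, HasDerivAt x ((1 - x t ^ 2) * (x t - y t)) t :=
      fun t ht => hx t (le_trans hT₁0 (le_trans ha ht.1))
    have := growth_aux (c := 0) hab hd ?_
    · linarith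
    · intro t ht
      have hta : T₁ ≤ t := le_trans ha ht.1.le
      have h2 := hx1 t (le_trans hT₁0 hta)
      have h3 := hupos t hta
      have : (1 - x t ^ 2) * (x t - y t) = (x t ^ 2 - 1) * u t := by
        simp only [hu_def]; ring
      rw [this]
      exact mul_nonneg (by nlinarith) h3.le
  -- Step 4 : y grows linearly
  have hygrow : ∀ a b : ℝ, 0 ≤ a → a ≤ b → y a + ε * (b - a) ≤ y b := by
    intro a b ha hab
    apply growth_aux hab (fun t ht => hy t (le_trans ha ht.1))
    intro t ht
    have := hx1 t (le_trans ha ht.1.le)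
    nlinarith
  -- Step 5 : x tends to infinity
  have hxtop : Tendsto x atTop atTop := by
    rw [tendsto_atTop]
    intro B
    rsuffices ⟨T, hT, hTB⟩ : ∃ T, T₁ ≤ T ∧ B ≤ x T
    · filter_upwards [eventually_ge_atTop T] with t ht
      exact le_trans hTB (hxmono T t hT ht)
    by_contra hcon
    push_neg at hcon
    -- then u ≥ 1 eventually, forcing x to grow linearly beyond B
    set T₂ := max T₁ (T₁ + (1 + B - y T₁) / ε) with hT₂_def
    have hT₂T₁ : T₁ ≤ T₂ := le_max_left _ _
    have huge : ∀ t, T₂ ≤ t → 1 ≤ u t := by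
      intro t ht
      have ht1 : T₁ ≤ t := le_trans hT₂T₁ ht
      have hy' := hygrow T₁ t hT₁0 ht1
      have ht2 : T₁ + (1 + B - y T₁) / ε ≤ t := le_trans (le_max_right _ _) ht
      have hxB := hcon t ht1
      have ht2' : (1 + B - y T₁) / ε ≤ t - T₁ := by linarith
      rw [div_le_iff₀ hε] at ht2'
      simp only [hu_def]
      linarith
    have hxT₂ : 1 < x T₂ := hx1 T₂ (le_trans hT₁0 hT₂T₁)
    obtain ⟨c, hc_def⟩ : ∃ c, c = x T₂ ^ 2 - 1 := ⟨_, rfl⟩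
    have hc0 : 0 < c := by rw [hc_def]; nlinarith
    obtain ⟨T₃, hT₃_def⟩ : ∃ T₃, T₃ = T₂ + (B - x T₂) / c + 1 := ⟨_, rfl⟩
    have hBx : x T₂ < B := hcon T₂ hT₂T₁
    have hT₃T₂ : T₂ ≤ T₃ := by
      have : 0 ≤ (B - x T₂) / c := div_nonneg (by linarith) hc0.le
      linarith
    have hd : ∀ t ∈ Icc T₂ T₃, HasDerivAt x ((1 - x t ^ 2) * (x t - y t)) t :=
      fun t ht => hx t (le_trans hT₁0 (le_trans hT₂T₁ ht.1))
    have hgr := growth_aux (c := c) hT₃T₂ hd ?_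
    · have hceq : c * (T₃ - T₂) = (B - x T₂) + c := by
        have : T₃ - T₂ = (B - x T₂) / c + 1 := by simp only [hT₃_def]; ring
        rw [this]
        field_simp
      rw [hceq] at hgr
      have := hcon T₃ (le_trans hT₂T₁ hT₃T₂)
      linarith
    · intro t ht
      have ht2 : T₂ ≤ t := ht.1.le
      have hu1 := huge t ht2
      have hxt : x T₂ ≤ x t := hxmono T₂ t hT₂T₁ ht2
      have hxgt := hx1 t (le_trans hT₁0 (le_trans hT₂T₁ ht2))
      have : (1 - x t ^ 2) * (x t - y t) = (x t ^ 2 - 1) * u t := by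
        simp only [hu_def]; ring
      rw [this, hc_def]
      have hA : 0 ≤ (x t ^ 2 - 1) * (u t - 1) := mul_nonneg (by nlinarith) (by linarith)
      nlinarith [hA, mul_nonneg (by linarith : (0:ℝ) ≤ x t - x T₂) (by linarith : (0:ℝ) ≤ x t + x T₂)]
  -- Step 6 : conclusion
  rw [Metric.tendsto_atTop]
  intro δ hδ
  obtain ⟨δ', hδ'_def⟩ : ∃ d : ℝ, d = δ / 2 := ⟨_, rfl⟩
  have hδ'0 : 0 < δ' := by rw [hδ'_def]; positivity
  obtain ⟨T₀, hT₀⟩ :=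
    (tendsto_atTop.1 hxtop (max 2 (4 * ε / δ'))).exists_forall_of_atTop
  obtain ⟨T₂, hT₂_def⟩ : ∃ T, T = max T₀ T₁ := ⟨_, rfl⟩
  have hT₂T₁ : T₁ ≤ T₂ := hT₂_def ▸ le_max_right _ _
  have hT₂0 : 0 ≤ T₂ := le_trans hT₁0 hT₂T₁
  have hkey : ∀ t, T₂ ≤ t → δ' ≤ u t → u' t ≤ -ε := by
    intro t ht hut
    have hX : max 2 (4 * ε / δ') ≤ x t :=
      hT₀ t (le_trans (hT₂_def ▸ le_max_left _ _) ht)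
    have h2x : (2:ℝ) ≤ x t := le_trans (le_max_left _ _) hX
    have h4 : 4 * ε ≤ x t * δ' := by
      have hd : 4 * ε / δ' ≤ x t := le_trans (le_max_right _ _) hX
      rw [div_le_iff₀ hδ'0] at hd
      linarith
    have hut' : δ' ≤ y t - x t := hut
    simp only [hu'_def]
    have hA : 0 ≤ (x t ^ 2 - 1) * ((y t - x t) - δ') :=
      mul_nonneg (by nlinarith) (by linarith)
    have hB : 0 ≤ (δ' * x t - 4 * ε) * x t := mul_nonneg (by linarith) (by linarith)
    have hC2 : 0 ≤ δ' * (x t ^ 2 - 4) := mul_nonneg hδ'0.le (by nlinarith)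
    have hD2 : 0 ≤ ε * (x t - 2) := mul_nonneg hε.le (by linarith)
    nlinarith [hA, hB, hC2, hD2]
  obtain ⟨T₃, hT₃2, hT₃u⟩ : ∃ T, T₂ ≤ T ∧ u T ≤ δ' := by
    by_contra hcon
    push_neg at hcon
    have h0 : 0 < u T₂ := hupos T₂ hT₂T₁
    have hTge : T₂ ≤ T₂ + u T₂ / ε := le_add_of_nonneg_right (div_nonneg h0.le hε.le)
    have hdec := decay_aux (c := -ε) hTge (fun t ht => hu t (le_trans hT₂0 ht.1)) ?_
    · have heps : ε * (u T₂ / ε) = u T₂ := by field_simp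
      have hc2 := hcon _ hTge
      have : -ε * (T₂ + u T₂ / ε - T₂) = -(u T₂) := by
        rw [neg_mul]
        rw [show T₂ + u T₂ / ε - T₂ = u T₂ / ε by ring]
        rw [heps]
      rw [this] at hdec
      linarith
    · intro t ht
      exact hkey t ht.1.le (hcon t ht.1.le).le
  have hclaim : ∀ t, T₃ ≤ t → u t ≤ δ' := by
    intro t₂ ht₂
    by_contra hgt
    push_neg at hgt
    have hT₃0 : 0 ≤ T₃ := le_trans hT₂0 hT₃2
    have hucont : ContinuousOn u (Icc T₃ t₂) := fun r hr =>
      (hu r (le_trans hT₃0 hr.1)).continuousAt.continuousWithinAt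
    have hScl : IsClosed (Icc T₃ t₂ ∩ u ⁻¹' Iic δ') :=
      hucont.preimage_isClosed_of_isClosed isClosed_Icc isClosed_Iic
    have hSne : (Icc T₃ t₂ ∩ u ⁻¹' Iic δ').Nonempty := ⟨T₃, ⟨⟨le_rfl, ht₂⟩, hT₃u⟩⟩
    have hSbdd : BddAbove (Icc T₃ t₂ ∩ u ⁻¹' Iic δ') := ⟨t₂, fun r hr => hr.1.2⟩
    obtain ⟨s, hs_def⟩ : ∃ s, s = sSup (Icc T₃ t₂ ∩ u ⁻¹' Iic δ') := ⟨_, rfl⟩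
    have hsS : s ∈ Icc T₃ t₂ ∩ u ⁻¹' Iic δ' := hs_def ▸ hScl.csSup_mem hSne hSbdd
    have hst₂ : s ≤ t₂ := hsS.1.2
    have habove : ∀ r, s < r → r ≤ t₂ → δ' < u r := by
      intro r h1' h2'
      by_contra h3'
      push_neg at h3'
      have hr : r ∈ Icc T₃ t₂ ∩ u ⁻¹' Iic δ' :=
        ⟨⟨le_trans hsS.1.1 h1'.le, h2'⟩, h3'⟩
      have := hs_def ▸ le_csSup hSbdd hr
      exact absurd this (not_le.2 h1')
    have hdec := decay_aux (c := 0) hst₂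
      (fun t ht => hu t (le_trans (le_trans hT₃0 hsS.1.1) ht.1)) ?_
    · have hus : u s ≤ δ' := hsS.2
      simp only [zero_mul] at hdec
      linarith
    · intro t ht
      have h5 : u' t ≤ -ε :=
        hkey t (le_trans hT₃2 (le_trans hsS.1.1 ht.1.le))
          (habove t ht.1 ht.2.le).le
      linarith
  refine ⟨T₃, fun t ht => ?_⟩
  have h1' : 0 < u t := hupos t (le_trans (le_trans hT₂T₁ hT₃2) ht)
  have h2' : u t ≤ δ' := hclaim t ht
  have h3' : dist (u t) 0 = |u t| := by rw [Real.dist_eq, sub_zero]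
  calc dist (u t) 0 = |u t| := h3'
    _ = u t := abs_of_pos h1'
    _ ≤ δ' := h2'
    _ < δ := by rw [hδ'_def]; linarith

/-- Every global solution of `ẋ = (1 - x²)(x - y), ẏ = ε x` starting outside
the strip `|x| ≤ 1` is asymptotic to the line `y = x`. -/
theorem orbit_asymptotic_to_diagonal
    (ε : ℝ) (hε : 0 < ε) (x y : ℝ → ℝ)
    (hx : ∀ t ∈ Set.Ici (0 : ℝ), HasDerivAt x ((1 - x t ^ 2) * (x t - y t)) t)
    (hy : ∀ t ∈ Set.Ici (0 : ℝ), HasDerivAt y (ε * x t) t)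
    (hx0 : 1 < |x 0|) :
    Tendsto (fun t => y t - x t) atTop (𝓝 0) := by
  rcases abs_cases (x 0) with ⟨h, _⟩ | ⟨h, _⟩
  · exact main_pos ε hε x y hx hy (h ▸ hx0)
  · have h1 : 1 < -(x 0) := h ▸ hx0
    have hX : ∀ t ∈ Set.Ici (0 : ℝ),
        HasDerivAt (fun t => -(x t))
          ((1 - (-(x t)) ^ 2) * ((-(x t)) - (-(y t)))) t := by
      intro t ht
      have := (hx t ht).neg
      refine this.congr_deriv ?_
      ring
    have hY : ∀ t ∈ Set.Ici (0 : ℝ),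
        HasDerivAt (fun t => -(y t)) (ε * (-(x t))) t := by
      intro t ht
      have := (hy t ht).neg
      refine this.congr_deriv ?_
      ring
    have hmain := main_pos ε hε (fun t => -(x t)) (fun t => -(y t)) hX hY h1
    have := hmain.neg
    simp only [neg_zero] at this
    convert this using 2 with t
    ring
end
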